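/- arXiv:1811.02002 — 6 statements merged into one kernel-verified Lean document; each statement's English description precedes it below -/
import Mathlib

section
/- Derivative of relative entropy in its first argument: Let μ, μ', μ'' ∈ M(Z) have densities ρ, ρ', ρ''. Assume that ρ''/ρ is essentially bounded on Z and that ρ log(ρ/ρ') and ρ'' log(ρ/ρ') are Lebesgue integrable on Z. Then the function ε ↦ ∫_Z (ρ + ε ρ'') log((ρ + ε ρ'')/ρ') dz, defined for ε ≥ 0, has right-hand derivative at ε = 0 equal to ∫_Z ρ'' (1 + log(ρ/ρ')) dz. -/
open MeasureTheory Real ENNReal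

namespace Paper

noncomputable section

/-- Total variation distance between two measures:
`dTV(μ,μ') = sup over measurable A of |μ(A) − μ'(A)|`. -/
def tvDist {E : Type*} [MeasurableSpace E] (μ μ' : Measure E) : ℝ :=
  ⨆ A : {A : Set E // MeasurableSet A}, |(μ A.1).toReal - (μ' A.1).toReal|

/-- Essential supremum of `|h|` on `Z` with respect to Lebesgue measure. -/
def supNormOn {d : ℕ} (Z : Set (Fin d → ℝ)) (h : (Fin d → ℝ) → ℝ) : ℝ :=
  (essSup (fun z => ENNReal.ofReal |h z|) (volume.restrict Z)).toReal

/-- `μ ∈ M(Z)`: a Borel probability measure on `Z`, absolutely continuous w.r.t.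
Lebesgue measure restricted to `Z`, with (a.e. on `Z`) positive density `ρ`. -/
def IsDensityMeasure {d : ℕ} (Z : Set (Fin d → ℝ)) (μ : Measure (Fin d → ℝ))
    (ρ : (Fin d → ℝ) → ℝ) : Prop :=
  IsProbabilityMeasure μ ∧ Measurable ρ ∧
    (∀ᵐ z ∂(volume.restrict Z), 0 < ρ z) ∧
    μ = (volume.restrict Z).withDensity (fun z => ENNReal.ofReal (ρ z))

/-- Entropic mirror-descent update `MD_η(μ, h)` for `μ` with density `ρ` on `Z`:
the probability measure with density `ρ e^{−ηh} / ∫_Z ρ e^{−ηh}`. -/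
def MDmeas {d : ℕ} (Z : Set (Fin d → ℝ)) (η : ℝ) (ρ h : (Fin d → ℝ) → ℝ) :
    Measure (Fin d → ℝ) :=
  (volume.restrict Z).withDensity
    (fun z => ENNReal.ofReal
      (ρ z * Real.exp (-η * h z) / ∫ y in Z, ρ y * Real.exp (-η * h y)))

/-- Gibbs measure on `Z` with density `e^h / ∫_Z e^h` w.r.t. Lebesgue measure. -/
def gibbsMeasure {d : ℕ} (Z : Set (Fin d → ℝ)) (h : (Fin d → ℝ) → ℝ) :
    Measure (Fin d → ℝ) :=
  (volume.restrict Z).withDensity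
    (fun z => ENNReal.ofReal (Real.exp (h z) / ∫ y in Z, Real.exp (h y)))

/-- Log-partition functional `Φ*(h) = log ∫_Z e^h dz`. -/
def logPart {d : ℕ} (Z : Set (Fin d → ℝ)) (h : (Fin d → ℝ) → ℝ) : ℝ :=
  Real.log (∫ z in Z, Real.exp (h z))

/-- Dual Bregman divergence `D*(h,h') = Φ*(h) − Φ*(h') − ∫_Z (h−h') dGibbs(h')`. -/
def dualBregman {d : ℕ} (Z : Set (Fin d → ℝ)) (h h' : (Fin d → ℝ) → ℝ) : ℝ :=
  logPart Z h - logPart Z h' - ∫ z, (h z - h' z) ∂(gibbsMeasure Z h')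

/-- Payoff operator `(Gν)(w) = ∫_Θ K(w,θ) dν(θ)`. -/
def Gop {p q : ℕ} (K : (Fin p → ℝ) → (Fin q → ℝ) → ℝ) (ν : Measure (Fin q → ℝ))
    (w : Fin p → ℝ) : ℝ :=
  ∫ θ, K w θ ∂ν

/-- Adjoint payoff operator `(G†μ)(θ) = ∫_W K(w,θ) dμ(w)`. -/
def Gadj {p q : ℕ} (K : (Fin p → ℝ) → (Fin q → ℝ) → ℝ) (μ : Measure (Fin p → ℝ))
    (θ : Fin q → ℝ) : ℝ :=
  ∫ w, K w θ ∂μ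

/-- Mixed-strategy game value `F(μ,ν) = ⟨μ,g⟩ − ⟨μ,Gν⟩`. -/
def payoff {p q : ℕ} (g : (Fin p → ℝ) → ℝ) (K : (Fin p → ℝ) → (Fin q → ℝ) → ℝ)
    (μ : Measure (Fin p → ℝ)) (ν : Measure (Fin q → ℝ)) : ℝ :=
  (∫ w, g w ∂μ) - ∫ w, Gop K ν w ∂μ

/-- right-hand derivative of the relative entropy in its first argument. -/
theorem relativeEntropy_rightDeriv
    (d : ℕ) (Z : Set (Fin d → ℝ)) (hZ : MeasurableSet Z)
    (hZ0 : volume Z ≠ 0) (hZfin : volume Z ≠ ⊤)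
    (μ μ' μ'' : Measure (Fin d → ℝ)) (ρ ρ' ρ'' : (Fin d → ℝ) → ℝ)
    (hμ : IsDensityMeasure Z μ ρ) (hμ' : IsDensityMeasure Z μ' ρ')
    (hμ'' : IsDensityMeasure Z μ'' ρ'')
    (hratio : ∃ C, ∀ᵐ z ∂(volume.restrict Z), |ρ'' z / ρ z| ≤ C)
    (hint1 : IntegrableOn (fun z => ρ z * Real.log (ρ z / ρ' z)) Z)
    (hint2 : IntegrableOn (fun z => ρ'' z * Real.log (ρ z / ρ' z)) Z) :
    HasDerivWithinAt
      (fun ε : ℝ => ∫ z in Z, (ρ z + ε * ρ'' z) * Real.log ((ρ z + ε * ρ'' z) / ρ' z))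
      (∫ z in Z, ρ'' z * (1 + Real.log (ρ z / ρ' z))) (Set.Ici (0 : ℝ)) 0 := by
  obtain ⟨C, hC⟩ := hratio
  obtain ⟨hμP, hρm, hρpos, hμeq⟩ := hμ
  obtain ⟨hμ'P, hρ'm, hρ'pos, hμ'eq⟩ := hμ'
  obtain ⟨hμ''P, hρ''m, hρ''pos, hμ''eq⟩ := hμ''
  set ν := volume.restrict Z with hν
  set B : ℝ := max C 1 with hB
  have hB1 : (1:ℝ) ≤ B := le_max_right _ _
  have hB0 : (0:ℝ) < B := lt_of_lt_of_le one_pos hB1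
  set δ : ℝ := 1 / (2*B) with hδ
  have hδ0 : 0 < δ := by positivity
  -- ρ'' is integrable on Z
  have hρ''int : Integrable ρ'' ν := by
    refine ⟨hρ''m.aestronglyMeasurable, ?_⟩
    have h1 : ∫⁻ z, ENNReal.ofReal (ρ'' z) ∂ν = 1 := by
      have h2 := hμ''P.measure_univ
      rw [hμ''eq, withDensity_apply _ MeasurableSet.univ, setLIntegral_univ] at h2
      exact h2
    rw [HasFiniteIntegral]
    have h3 : ∫⁻ z, ‖ρ'' z‖ₑ ∂ν = ∫⁻ z, ENNReal.ofReal (ρ'' z) ∂ν := by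
      refine lintegral_congr_ae (hρ''pos.mono fun z hz => ?_)
      exact (Real.enorm_eq_ofReal hz.le)
    rw [h3, h1]
    exact one_lt_top
  -- a.e. facts
  have hae : ∀ᵐ z ∂ν, 0 < ρ z ∧ 0 < ρ' z ∧ |ρ'' z| ≤ B * ρ z := by
    filter_upwards [hρpos, hρ'pos, hC] with z h1 h2 h3
    refine ⟨h1, h2, ?_⟩
    calc |ρ'' z| = |ρ'' z / ρ z| * |ρ z| := by rw [← abs_mul, div_mul_cancel₀ _ h1.ne']
    _ = |ρ'' z / ρ z| * ρ z := by rw [abs_of_pos h1]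
    _ ≤ B * ρ z := by
        apply mul_le_mul_of_nonneg_right (h3.trans (le_max_left _ _)) h1.le
  set F : ℝ → (Fin d → ℝ) → ℝ :=
    fun x z => (ρ z + x * ρ'' z) * Real.log ((ρ z + x * ρ'' z) / ρ' z) with hF
  set F' : ℝ → (Fin d → ℝ) → ℝ :=
    fun x z => ρ'' z * (1 + Real.log ((ρ z + x * ρ'' z) / ρ' z)) with hF'
  have hFmeas : ∀ x : ℝ, AEStronglyMeasurable (F x) ν := by
    intro x
    have hg : Measurable fun z => ρ z + x * ρ'' z := hρm.add (hρ''m.const_mul x)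
    exact (hg.mul ((hg.div hρ'm).log)).aestronglyMeasurable
  have hF'meas : AEStronglyMeasurable (F' 0) ν := by
    have hg : Measurable fun z => ρ z + (0:ℝ) * ρ'' z := hρm.add (hρ''m.const_mul 0)
    exact (hρ''m.mul ((measurable_const.add (hg.div hρ'm).log))).aestronglyMeasurable
  have hFint : Integrable (F 0) ν := by
    refine hint1.congr (Filter.Eventually.of_forall fun z => ?_)
    simp [hF]
  have hbound_int : Integrable (fun z => |ρ'' z| * (2 + |Real.log (ρ z / ρ' z)|)) ν := by
    have h1 : Integrable (fun z => 2 * |ρ'' z| + |ρ'' z * Real.log (ρ z / ρ' z)|) ν :=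
      (hρ''int.abs.const_mul 2).add hint2.abs
    refine h1.congr (Filter.Eventually.of_forall fun z => ?_)
    simp only [abs_mul]; ring
  -- key pointwise facts on the ball
  have hkey : ∀ᵐ z ∂ν, ∀ x ∈ Metric.ball (0:ℝ) δ,
      (0 < ρ z + x * ρ'' z) ∧ ρ z / 2 ≤ ρ z + x * ρ'' z ∧ ρ z + x * ρ'' z ≤ 3 / 2 * ρ z := by
    filter_upwards [hae] with z ⟨h1, h2, h3⟩ x hx
    have hx' : |x| < δ := by simpa [Real.dist_eq] using hx
    have h4 : |x * ρ'' z| ≤ ρ z / 2 := by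
      calc |x * ρ'' z| = |x| * |ρ'' z| := abs_mul _ _
      _ ≤ δ * (B * ρ z) := mul_le_mul hx'.le h3 (abs_nonneg _) hδ0.le
      _ = ρ z / 2 := by rw [hδ]; field_simp
    have h5 := abs_le.mp h4
    refine ⟨by linarith, by linarith, by linarith⟩
  have h_bound : ∀ᵐ z ∂ν, ∀ x ∈ Metric.ball (0:ℝ) δ,
      ‖F' x z‖ ≤ |ρ'' z| * (2 + |Real.log (ρ z / ρ' z)|) := by
    filter_upwards [hae, hkey] with z ⟨h1, h2, h3⟩ hk x hx
    obtain ⟨hp, hlo, hhi⟩ := hk x hx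
    have hsplit : Real.log ((ρ z + x * ρ'' z) / ρ' z)
        = Real.log ((ρ z + x * ρ'' z) / ρ z) + Real.log (ρ z / ρ' z) := by
      rw [← Real.log_mul (by positivity) (by positivity)]
      congr 1
      field_simp
    have hu1 : Real.log ((ρ z + x * ρ'' z) / ρ z) ≤ 1 := by
      have := Real.log_le_sub_one_of_pos (show (0:ℝ) < (ρ z + x * ρ'' z) / ρ z by positivity)
      have hle : (ρ z + x * ρ'' z) / ρ z ≤ 3/2 := by
        rw [div_le_iff₀ h1]; linarith
      linarith
    have hu2 : -1 ≤ Real.log ((ρ z + x * ρ'' z) / ρ z) := by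
      have hge : (2:ℝ)⁻¹ ≤ (ρ z + x * ρ'' z) / ρ z := by
        rw [le_div_iff₀ h1]; linarith
      have h6 : Real.log ((2:ℝ)⁻¹) ≤ Real.log ((ρ z + x * ρ'' z) / ρ z) :=
        Real.log_le_log (by norm_num) hge
      have h7 : Real.log ((2:ℝ)⁻¹) = - Real.log 2 := Real.log_inv 2
      have h8 : Real.log 2 ≤ 1 := by
        have := Real.log_le_sub_one_of_pos (show (0:ℝ) < 2 by norm_num); linarith
      linarith
    have habs : |Real.log ((ρ z + x * ρ'' z) / ρ z)| ≤ 1 := abs_le.mpr ⟨hu2, hu1⟩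
    have : |1 + Real.log ((ρ z + x * ρ'' z) / ρ' z)| ≤ 2 + |Real.log (ρ z / ρ' z)| := by
      rw [hsplit]
      calc |1 + (Real.log ((ρ z + x * ρ'' z) / ρ z) + Real.log (ρ z / ρ' z))|
          ≤ |1 + Real.log ((ρ z + x * ρ'' z) / ρ z)| + |Real.log (ρ z / ρ' z)| := by
            have := abs_add_le (1 + Real.log ((ρ z + x * ρ'' z) / ρ z)) (Real.log (ρ z / ρ' z))
            simpa [add_assoc] using this
      _ ≤ 2 + |Real.log (ρ z / ρ' z)| := by
            have := abs_add_le (1:ℝ) (Real.log ((ρ z + x * ρ'' z) / ρ z))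
            have h9 : |(1:ℝ)| = 1 := abs_one
            nlinarith [abs_nonneg (Real.log (ρ z / ρ' z))]
    calc ‖F' x z‖ = |ρ'' z| * |1 + Real.log ((ρ z + x * ρ'' z) / ρ' z)| := by
          simp [hF', Real.norm_eq_abs, abs_mul]
    _ ≤ |ρ'' z| * (2 + |Real.log (ρ z / ρ' z)|) :=
          mul_le_mul_of_nonneg_left this (abs_nonneg _)
  have h_diff : ∀ᵐ z ∂ν, ∀ x ∈ Metric.ball (0:ℝ) δ, HasDerivAt (F · z) (F' x z) x := by
    filter_upwards [hae, hkey] with z ⟨h1, h2, h3⟩ hk x hx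
    obtain ⟨hp, _, _⟩ := hk x hx
    have hlin : HasDerivAt (fun t : ℝ => ρ z + t * ρ'' z) (ρ'' z) x := by
      simpa using (((hasDerivAt_id x).mul_const (ρ'' z)).const_add (ρ z))
    have hmul : HasDerivAt (fun u : ℝ => u * Real.log u)
        (Real.log (ρ z + x * ρ'' z) + 1) (ρ z + x * ρ'' z) :=
      Real.hasDerivAt_mul_log hp.ne'
    have hcomp := (hmul.comp x hlin)
    have hsub := hcomp.sub (hlin.mul_const (Real.log (ρ' z)))
    have heq : (fun t : ℝ => (ρ z + t * ρ'' z) * Real.log (ρ z + t * ρ'' z)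
        - (ρ z + t * ρ'' z) * Real.log (ρ' z)) =ᶠ[nhds x] (F · z) := by
      filter_upwards [Metric.isOpen_ball.mem_nhds hx] with t ht
      obtain ⟨hpt, _, _⟩ := hk t ht
      simp only [hF]
      rw [Real.log_div hpt.ne' h2.ne']
      ring
    have := hsub.congr_of_eventuallyEq heq.symm
    refine this.congr_deriv ?_
    show _ = ρ'' z * (1 + Real.log ((ρ z + x * ρ'' z) / ρ' z))
    rw [Real.log_div hp.ne' h2.ne']
    ring
  have hmain := (hasDerivAt_integral_of_dominated_loc_of_deriv_le (Metric.ball_mem_nhds 0 hδ0)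
    (Filter.Eventually.of_forall hFmeas) hFint hF'meas h_bound hbound_int h_diff).2
  have hval : F' 0 = fun z => ρ'' z * (1 + Real.log (ρ z / ρ' z)) := by
    funext z; simp [hF']
  rw [hval] at hmain
  exact hmain.hasDerivWithinAt


end

end Paper
end

section
/- Strong convexity of negative entropy with respect to total variation: Let μ, μ' ∈ M(Z) have densities ρ, ρ' with ρ log ρ and ρ' log ρ' Lebesgue integrable, and let λ ∈ (0,1). Then Φ(λμ + (1−λ)μ') ≤ λ Φ(μ) + (1−λ) Φ(μ') − 2 λ (1−λ) dTV(μ, μ')². -/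
open MeasureTheory Real ENNReal

namespace Paper

noncomputable section

private noncomputable def Fp (t : ℝ) : ℝ := 2*(t+2)*(t*Real.log t - t + 1) - 3*(t-1)^2
private noncomputable def Gp (t : ℝ) : ℝ := 4*(t+1)*Real.log t - 8*(t-1)

private lemma hasDerivAt_Gp {t : ℝ} (ht : 0 < t) :
    HasDerivAt Gp (4*Real.log t + 4*(t+1)/t - 8) t := by
  have h1 : HasDerivAt (fun t : ℝ => 4*(t+1)*Real.log t)
      (4*Real.log t + 4*(t+1)*(1/t)) t := by
    have := ((hasDerivAt_id t).add_const 1).const_mul 4 |>.mul (Real.hasDerivAt_log ht.ne')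
    exact this.congr_deriv (by simp only [id]; ring)
  have h2 : HasDerivAt (fun t : ℝ => 8*(t-1)) 8 t := by
    simpa using ((hasDerivAt_id t).sub_const 1).const_mul 8
  have := h1.sub h2
  exact this.congr_deriv (by ring)

private lemma hasDerivAt_Fp {t : ℝ} (ht : 0 < t) : HasDerivAt Fp (Gp t) t := by
  have h1 : HasDerivAt (fun t : ℝ => 2*(t+2)) 2 t := by
    simpa using ((hasDerivAt_id t).add_const 2).const_mul 2
  have h2 : HasDerivAt (fun t : ℝ => t*Real.log t - t + 1) (Real.log t) t := by
    have hl : HasDerivAt (fun t : ℝ => t*Real.log t) (Real.log t + 1) t := by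
      have := (hasDerivAt_id t).mul (Real.hasDerivAt_log ht.ne')
      exact this.congr_deriv (by simp only [id]; field_simp)
    have := (hl.sub (hasDerivAt_id t)).add_const 1
    simpa using this
  have h3 : HasDerivAt (fun t : ℝ => 3*(t-1)^2) (3*(2*(t-1))) t := by
    have := (((hasDerivAt_id t).sub_const 1).pow 2).const_mul 3
    simpa using this
  have := (h1.mul h2).sub h3
  exact this.congr_deriv (by unfold Gp; ring)

private lemma Gp_nonneg {t : ℝ} (ht : 1 ≤ t) : 0 ≤ Gp t := by
  have h0 : Gp 1 = 0 := by simp [Gp]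
  rw [← h0]
  rcases eq_or_lt_of_le ht with h | h
  · rw [h]
  have : MonotoneOn Gp (Set.Icc 1 t) := by
    apply monotoneOn_of_deriv_nonneg (convex_Icc 1 t)
    · apply ContinuousOn.sub
      · exact (continuousOn_const.mul (continuousOn_id.add continuousOn_const)|>.mul
          (Real.continuousOn_log.mono (by intro x hx; simp at hx ⊢; linarith [hx.1])))
      · fun_prop
    · intro x hx
      rw [interior_Icc] at hx
      exact (hasDerivAt_Gp (by linarith [hx.1])).differentiableAt.differentiableWithinAt
    · intro x hx
      rw [interior_Icc] at hx
      have hx0 : (0:ℝ) < x := by linarith [hx.1]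
      rw [HasDerivAt.deriv (hasDerivAt_Gp hx0)]
      have := Real.one_sub_inv_le_log_of_pos hx0
      have h4 : 4*(x+1)/x = 4 + 4/x := by field_simp
      rw [h4]
      have : 1 - x⁻¹ ≤ Real.log x := this
      rw [inv_eq_one_div] at this
      have h5 : 4/x = 4*(1/x) := by ring
      linarith
  exact this (by simp [le_of_lt h]) (by simp [ht]) ht

private lemma Gp_monoOn {a b : ℝ} (ha : 0 < a) : MonotoneOn Gp (Set.Icc a b) := by
  apply monotoneOn_of_deriv_nonneg (convex_Icc a b)
  · apply ContinuousOn.sub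
    · exact (continuousOn_const.mul (continuousOn_id.add continuousOn_const)|>.mul
        (Real.continuousOn_log.mono (by intro x hx; simp at hx ⊢; intro h; linarith [hx.1])))
    · fun_prop
  · intro x hx
    rw [interior_Icc] at hx
    exact (hasDerivAt_Gp (lt_of_lt_of_le ha hx.1.le)).differentiableAt.differentiableWithinAt
  · intro x hx
    rw [interior_Icc] at hx
    have hx0 : (0:ℝ) < x := lt_of_lt_of_le ha hx.1.le
    rw [HasDerivAt.deriv (hasDerivAt_Gp hx0)]
    have := Real.one_sub_inv_le_log_of_pos hx0
    rw [inv_eq_one_div] at this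
    have h4 : 4*(x+1)/x = 4 + 4/x := by field_simp
    have h5 : 4/x = 4*(1/x) := by ring
    linarith

private lemma Gp_sign {t : ℝ} (ht : 0 < t) : (1 ≤ t → 0 ≤ Gp t) ∧ (t ≤ 1 → Gp t ≤ 0) := by
  have h0 : Gp 1 = 0 := by simp [Gp]
  constructor
  · intro h1
    rw [← h0]
    exact Gp_monoOn one_pos (Set.mem_Icc.2 ⟨le_refl 1, h1⟩) (Set.mem_Icc.2 ⟨h1, le_refl t⟩) h1
  · intro h1
    rw [← h0]
    exact Gp_monoOn ht (Set.mem_Icc.2 ⟨le_refl t, h1⟩) (Set.mem_Icc.2 ⟨h1, le_refl 1⟩) h1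

private lemma contOn_Fp {a b : ℝ} (ha : 0 < a) : ContinuousOn Fp (Set.Icc a b) := by
  have hlog : ContinuousOn Real.log (Set.Icc a b) :=
    Real.continuousOn_log.mono (by intro x hx; simp at hx ⊢; intro h; linarith [hx.1])
  apply ContinuousOn.sub
  · exact (continuousOn_const.mul (continuousOn_id.add continuousOn_const)).mul
      (((continuousOn_id.mul hlog).sub continuousOn_id).add continuousOn_const)
  · fun_prop

private lemma Fp_nonneg {t : ℝ} (ht : 0 < t) : 0 ≤ Fp t := by
  have h0 : Fp 1 = 0 := by simp [Fp]
  rcases le_total 1 t with h1 | h1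
  · rw [← h0]
    have : MonotoneOn Fp (Set.Icc 1 t) := by
      apply monotoneOn_of_deriv_nonneg (convex_Icc 1 t) (contOn_Fp one_pos)
      · intro x hx
        rw [interior_Icc] at hx
        exact (hasDerivAt_Fp (by linarith [hx.1])).differentiableAt.differentiableWithinAt
      · intro x hx
        rw [interior_Icc] at hx
        rw [HasDerivAt.deriv (hasDerivAt_Fp (by linarith [hx.1] : (0:ℝ) < x))]
        exact (Gp_sign (by linarith [hx.1])).1 hx.1.le
    exact this (Set.mem_Icc.2 ⟨le_refl 1, h1⟩) (Set.mem_Icc.2 ⟨h1, le_refl t⟩) h1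
  · rw [← h0]
    have : AntitoneOn Fp (Set.Icc t 1) := by
      apply antitoneOn_of_deriv_nonpos (convex_Icc t 1) (contOn_Fp ht)
      · intro x hx
        rw [interior_Icc] at hx
        exact (hasDerivAt_Fp (lt_of_lt_of_le ht hx.1.le)).differentiableAt.differentiableWithinAt
      · intro x hx
        rw [interior_Icc] at hx
        rw [HasDerivAt.deriv (hasDerivAt_Fp (lt_of_lt_of_le ht hx.1.le))]
        exact (Gp_sign (lt_of_lt_of_le ht hx.1.le)).2 hx.2.le
    exact this (Set.mem_Icc.2 ⟨le_refl t, h1⟩) (Set.mem_Icc.2 ⟨h1, le_refl 1⟩) h1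

private lemma pinsker_pointwise {p q : ℝ} (hp : 0 < p) (hq : 0 < q) :
    3*(p-q)^2/(2*(p+2*q)) ≤ p*(Real.log p - Real.log q) - p + q := by
  have hF := Fp_nonneg (div_pos hp hq)
  unfold Fp at hF
  rw [Real.log_div hp.ne' hq.ne'] at hF
  have hq2 : (0:ℝ) < q^2 := by positivity
  have key := mul_le_mul_of_nonneg_left (by linarith : 3*(p/q-1)^2
      ≤ 2*(p/q+2)*(p/q*(Real.log p - Real.log q) - p/q + 1)) hq2.le
  have e1 : q^2 * (3*(p/q-1)^2) = 3*(p-q)^2 := by field_simp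
  have e2 : q^2 * (2*(p/q+2)*(p/q*(Real.log p - Real.log q) - p/q + 1))
      = 2*(p+2*q)*(p*(Real.log p - Real.log q) - p + q) := by field_simp
  rw [e1, e2] at key
  rw [div_le_iff₀ (by linarith)]
  linarith [key]

open MeasureTheory

private lemma pinsker_integral {α : Type*} [MeasurableSpace α] (ν : Measure α) [IsFiniteMeasure ν]
    (p q : α → ℝ) (hpm : Measurable p) (hqm : Measurable q)
    (hp : ∀ᵐ z ∂ν, 0 < p z) (hq : ∀ᵐ z ∂ν, 0 < q z)
    (hpint : Integrable p ν) (hqint : Integrable q ν)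
    (hp1 : ∫ z, p z ∂ν = 1) (hq1 : ∫ z, q z ∂ν = 1)
    (hKL : Integrable (fun z => p z * (Real.log (p z) - Real.log (q z))) ν) :
    (∫ z, |p z - q z| ∂ν)^2 / 2 ≤ ∫ z, p z * (Real.log (p z) - Real.log (q z)) ∂ν := by
  set f : α → ℝ := fun z => p z * (Real.log (p z) - Real.log (q z)) with hf
  set G : α → ℝ := fun z => 3*(p z - q z)^2 / (2*(p z + 2*q z)) with hG
  set w : α → ℝ := fun z => 2*(p z + 2*q z)/3 with hw
  set u : α → ℝ := fun z => |p z - q z| with hu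
  have hGm : Measurable G := by
    rw [hG]
    exact (((hpm.sub hqm).pow_const 2).const_mul 3).div
      ((hpm.add (hqm.const_mul 2)).const_mul 2)
  have hbound : ∀ᵐ z ∂ν, 0 ≤ G z ∧ G z ≤ f z - p z + q z := by
    filter_upwards [hp, hq] with z hpz hqz
    constructor
    · have : (0:ℝ) < 2*(p z + 2*q z) := by positivity
      exact div_nonneg (by positivity) this.le
    · exact pinsker_pointwise hpz hqz
  have i1 : Integrable (fun z => f z - p z) ν := hKL.sub hpint
  have hbint : Integrable (fun z => f z - p z + q z) ν := i1.add hqint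
  have hGint : Integrable G ν := by
    apply hbint.mono' hGm.aestronglyMeasurable
    filter_upwards [hbound] with z hz
    rw [Real.norm_eq_abs, abs_of_nonneg hz.1]
    exact hz.2
  have hGle : ∫ z, G z ∂ν ≤ ∫ z, f z ∂ν := by
    have h1 : ∫ z, G z ∂ν ≤ ∫ z, (f z - p z + q z) ∂ν := by
      apply integral_mono_ae hGint hbint
      filter_upwards [hbound] with z hz using hz.2
    have h2 : ∫ z, (f z - p z + q z) ∂ν = ∫ z, f z ∂ν - 1 + 1 := by
      rw [integral_add i1 hqint, integral_sub hKL hpint, hp1, hq1]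
    linarith
  have huint : Integrable u ν := (hpint.sub hqint).abs
  have hwint : Integrable w ν := ((hpint.add (hqint.const_mul 2)).const_mul 2).div_const 3
  have hw2 : ∫ z, w z ∂ν = 2 := by
    have i2 : Integrable (fun z => 2 * q z) ν := hqint.const_mul 2
    have i3 : Integrable (fun z => p z + 2 * q z) ν := hpint.add i2
    calc ∫ z, w z ∂ν = ∫ z, 2*(p z + 2*q z)/3 ∂ν := rfl
    _ = (∫ z, 2*(p z + 2*q z) ∂ν)/3 := integral_div _ _
    _ = (2*∫ z, (p z + 2*q z) ∂ν)/3 := by rw [integral_const_mul]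
    _ = 2 := by rw [integral_add hpint i2, integral_const_mul, hp1, hq1]; norm_num
  set c : ℝ := (∫ z, u z ∂ν) / 2 with hc
  have hcnn : 0 ≤ c := by
    apply div_nonneg _ (by norm_num)
    exact integral_nonneg fun z => abs_nonneg _
  have hpoint : ∀ᵐ z ∂ν, 2*c*u z ≤ G z + c^2 * w z := by
    filter_upwards [hp, hq] with z hpz hqz
    have hwpos : 0 < w z := by
      have : (0:ℝ) < 2*(p z + 2*q z)/3 := by positivity
      exact this
    have hGw : G z * w z = u z^2 := by
      show 3*(p z - q z)^2/(2*(p z + 2*q z)) * (2*(p z + 2*q z)/3) = |p z - q z|^2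
      rw [sq_abs]
      have hd : 2*(p z + 2*q z) ≠ 0 := by positivity
      field_simp
    nlinarith [sq_nonneg (u z - c*w z), hGw, hwpos]
  have hint : 2*c*(∫ z, u z ∂ν) ≤ ∫ z, G z ∂ν + c^2*2 := by
    have i4 : Integrable (fun z => c^2 * w z) ν := hwint.const_mul _
    have h1 : ∫ z, 2*c*u z ∂ν ≤ ∫ z, (G z + c^2*w z) ∂ν :=
      integral_mono_ae (huint.const_mul _) (hGint.add i4) hpoint
    rw [integral_const_mul, integral_add hGint i4, integral_const_mul, hw2] at h1
    exact h1
  have hfin : (∫ z, u z ∂ν)^2/2 ≤ ∫ z, G z ∂ν := by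
    rw [hc] at hint
    nlinarith [hint]
  calc (∫ z, u z ∂ν)^2/2 ≤ ∫ z, G z ∂ν := hfin
  _ ≤ ∫ z, f z ∂ν := hGle

private lemma density_repr {d : ℕ} (Z : Set (Fin d → ℝ))
    (μ : Measure (Fin d → ℝ)) (ρ : (Fin d → ℝ) → ℝ)
    (hprob : IsProbabilityMeasure μ) (hmeas : Measurable ρ)
    (hpos : ∀ᵐ z ∂(volume.restrict Z), 0 < ρ z)
    (heq : μ = (volume.restrict Z).withDensity (fun z => ENNReal.ofReal (ρ z))) :
    Integrable ρ (volume.restrict Z) ∧ (∫ z, ρ z ∂(volume.restrict Z)) = 1 ∧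
    ∀ E : Set (Fin d → ℝ), MeasurableSet E →
      (μ E).toReal = ∫ z in E, ρ z ∂(volume.restrict Z) := by
  set ν := volume.restrict Z with hν
  have hae : ∀ᵐ z ∂ν, 0 ≤ ρ z := hpos.mono fun z h => h.le
  have huniv : ∫⁻ z, ENNReal.ofReal (ρ z) ∂ν = 1 := by
    have h1 := hprob.measure_univ
    rw [heq, withDensity_apply _ MeasurableSet.univ, Measure.restrict_univ] at h1
    exact h1
  have hint : Integrable ρ ν := by
    refine ⟨hmeas.aestronglyMeasurable, ?_⟩
    show (∫⁻ z, (‖ρ z‖₊ : ENNReal) ∂ν) < ⊤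
    have : ∫⁻ z, (‖ρ z‖₊ : ENNReal) ∂ν = ∫⁻ z, ENNReal.ofReal (ρ z) ∂ν := by
      apply lintegral_congr_ae
      filter_upwards [hae] with z hz
      rw [← enorm_eq_nnnorm, Real.enorm_eq_ofReal hz]
    rw [this, huniv]
    exact ENNReal.one_lt_top
  have hrepr : ∀ E : Set (Fin d → ℝ), MeasurableSet E →
      (μ E).toReal = ∫ z in E, ρ z ∂ν := by
    intro E hE
    rw [heq, withDensity_apply _ hE]
    rw [integral_eq_lintegral_of_nonneg_ae (ae_restrict_of_ae hae)
      hmeas.aestronglyMeasurable.restrict]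
  refine ⟨hint, ?_, hrepr⟩
  have := hrepr Set.univ MeasurableSet.univ
  rw [hprob.measure_univ, Measure.restrict_univ] at this
  simpa using this.symm


private lemma kl_aux {α : Type*} [MeasurableSpace α] (ν : Measure α) [IsFiniteMeasure ν]
    (c : ℝ) (hc : 0 < c) (p m : α → ℝ) (hpm : Measurable p) (hmm : Measurable m)
    (hppos : ∀ᵐ z ∂ν, 0 < p z) (hle : ∀ᵐ z ∂ν, c * p z ≤ m z)
    (hpint : Integrable p ν) (hmint : Integrable m ν) :
    Integrable (fun z => p z * (Real.log (p z) - Real.log (m z))) ν := by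
  have hmeas : Measurable (fun z => p z * (Real.log (p z) - Real.log (m z))) :=
    hpm.mul ((Real.measurable_log.comp hpm).sub (Real.measurable_log.comp hmm))
  have hgint : Integrable (fun z => |Real.log c| * p z + (m z + p z)) ν :=
    (hpint.const_mul _).add (hmint.add hpint)
  apply Integrable.mono' hgint hmeas.aestronglyMeasurable
  filter_upwards [hppos, hle] with z h1 h3
  have hmz : 0 < m z := lt_of_lt_of_le (mul_pos hc h1) h3
  have up : p z * (Real.log (p z) - Real.log (m z)) ≤ |Real.log c| * p z := by
    have hlog : Real.log c + Real.log (p z) ≤ Real.log (m z) := by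
      rw [← Real.log_mul hc.ne' h1.ne']
      exact Real.log_le_log (mul_pos hc h1) h3
    have hint1 := mul_le_mul_of_nonneg_left (by linarith : Real.log (p z) - Real.log (m z)
      ≤ -Real.log c) h1.le
    have hint2 := mul_le_mul_of_nonneg_left (neg_le_abs (Real.log c)) h1.le
    linarith
  have lo : p z - m z ≤ p z * (Real.log (p z) - Real.log (m z)) := by
    have hlog2 : Real.log (m z) - Real.log (p z) ≤ m z / p z - 1 := by
      rw [← Real.log_div hmz.ne' h1.ne']
      exact Real.log_le_sub_one_of_pos (div_pos hmz h1)
    have he : p z * (m z / p z - 1) = m z - p z := by field_simp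
    nlinarith [mul_le_mul_of_nonneg_left hlog2 h1.le]
  rw [Real.norm_eq_abs, abs_le]
  constructor
  · have : 0 ≤ |Real.log c| * p z := mul_nonneg (abs_nonneg _) h1.le
    linarith
  · have : 0 ≤ m z + p z := by linarith [hmz, h1]
    linarith


/-- strong convexity of the negative entropy w.r.t. total variation. -/
theorem negEntropy_strongly_convex
    (d : ℕ) (Z : Set (Fin d → ℝ)) (hZ : MeasurableSet Z)
    (hZ0 : volume Z ≠ 0) (hZfin : volume Z ≠ ⊤)
    (μ μ' : Measure (Fin d → ℝ)) (ρ ρ' : (Fin d → ℝ) → ℝ)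
    (hμ : IsDensityMeasure Z μ ρ) (hμ' : IsDensityMeasure Z μ' ρ')
    (hint1 : IntegrableOn (fun z => ρ z * Real.log (ρ z)) Z)
    (hint2 : IntegrableOn (fun z => ρ' z * Real.log (ρ' z)) Z)
    (lam : ℝ) (hlam : lam ∈ Set.Ioo (0 : ℝ) 1) :
    (∫ z in Z, (lam * ρ z + (1 - lam) * ρ' z)
        * Real.log (lam * ρ z + (1 - lam) * ρ' z))
      ≤ lam * (∫ z in Z, ρ z * Real.log (ρ z))
          + (1 - lam) * (∫ z in Z, ρ' z * Real.log (ρ' z))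
          - 2 * lam * (1 - lam) * (tvDist μ μ') ^ 2 := by
  obtain ⟨hprob, hmeasA, hposA, heqA⟩ := hμ
  obtain ⟨hprob', hmeasB, hposB, heqB⟩ := hμ'
  obtain ⟨hl0, hl1⟩ := hlam
  have h1l : (0:ℝ) < 1 - lam := by linarith
  set ν := volume.restrict Z with hν
  haveI : IsFiniteMeasure ν := ⟨by
    rw [hν, Measure.restrict_apply_univ]; exact lt_top_iff_ne_top.2 hZfin⟩
  obtain ⟨hintA, hA1, hreprA⟩ := density_repr Z μ ρ hprob hmeasA hposA heqA
  obtain ⟨hintB, hB1, hreprB⟩ := density_repr Z μ' ρ' hprob' hmeasB hposB heqB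
  set m : (Fin d → ℝ) → ℝ := fun z => lam * ρ z + (1-lam) * ρ' z with hm
  have hmeasM : Measurable m := (hmeasA.const_mul lam).add (hmeasB.const_mul (1-lam))
  have hposM : ∀ᵐ z ∂ν, 0 < m z := by
    filter_upwards [hposA, hposB] with z h1 h2
    have := mul_pos hl0 h1
    have := mul_pos h1l h2
    show 0 < lam * ρ z + (1-lam) * ρ' z
    linarith
  have hIA : Integrable (fun z => lam * ρ z) ν := hintA.const_mul lam
  have hIB : Integrable (fun z => (1-lam) * ρ' z) ν := hintB.const_mul (1-lam)
  have hintM : Integrable m ν := hIA.add hIB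
  have hM1 : ∫ z, m z ∂ν = 1 := by
    rw [hm]
    rw [integral_add hIA hIB, integral_const_mul, integral_const_mul, hA1, hB1]
    ring
  have hleA : ∀ᵐ z ∂ν, lam * ρ z ≤ m z := by
    filter_upwards [hposB] with z h2
    have := mul_pos h1l h2
    show lam * ρ z ≤ lam * ρ z + (1-lam) * ρ' z
    linarith
  have hleB : ∀ᵐ z ∂ν, (1-lam) * ρ' z ≤ m z := by
    filter_upwards [hposA] with z h1
    have := mul_pos hl0 h1
    show (1-lam) * ρ' z ≤ lam * ρ z + (1-lam) * ρ' z
    linarith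
  have hintf₁ : Integrable (fun z => ρ z * (Real.log (ρ z) - Real.log (m z))) ν :=
    kl_aux ν lam hl0 ρ m hmeasA hmeasM hposA hleA hintA hintM
  have hintf₂ : Integrable (fun z => ρ' z * (Real.log (ρ' z) - Real.log (m z))) ν :=
    kl_aux ν (1-lam) h1l ρ' m hmeasB hmeasM hposB hleB hintB hintM
  -- integrability of m log m
  have hintMlog : Integrable (fun z => m z * Real.log (m z)) ν := by
    have hg : Integrable (fun z => (m z + 1) + (lam * |ρ z * Real.log (ρ z)|
        + (1-lam) * |ρ' z * Real.log (ρ' z)|)) ν :=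
      (hintM.add (integrable_const 1)).add
        ((hint1.abs.const_mul lam).add (hint2.abs.const_mul (1-lam)))
    have hmlm : Measurable (fun z => m z * Real.log (m z)) :=
      hmeasM.mul (Real.measurable_log.comp hmeasM)
    apply hg.mono' hmlm.aestronglyMeasurable
    filter_upwards [hposA, hposB, hposM] with z h1 h2 hmz
    have hlow : m z - 1 ≤ m z * Real.log (m z) := by
      have := Real.one_sub_inv_le_log_of_pos hmz
      have he : m z * (1 - (m z)⁻¹) = m z - 1 := by
        rw [mul_sub, mul_inv_cancel₀ hmz.ne']
        ring
      have hint3 := mul_le_mul_of_nonneg_left this hmz.le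
      calc m z - 1 = m z * (1 - (m z)⁻¹) := he.symm
      _ ≤ m z * Real.log (m z) := hint3
    have hup : m z * Real.log (m z)
        ≤ lam * (ρ z * Real.log (ρ z)) + (1-lam) * (ρ' z * Real.log (ρ' z)) := by
      have hcx := Real.convexOn_mul_log.2 (Set.mem_Ici.2 h1.le) (Set.mem_Ici.2 h2.le)
        hl0.le h1l.le (by ring)
      simp only [smul_eq_mul] at hcx
      exact hcx
    rw [Real.norm_eq_abs, abs_le]
    constructor
    · have a1 : lam * (ρ z * Real.log (ρ z)) ≤ lam * |ρ z * Real.log (ρ z)| :=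
        mul_le_mul_of_nonneg_left (le_abs_self _) hl0.le
      have a2 : (1-lam) * (ρ' z * Real.log (ρ' z)) ≤ (1-lam) * |ρ' z * Real.log (ρ' z)| :=
        mul_le_mul_of_nonneg_left (le_abs_self _) h1l.le
      have b1 : 0 ≤ lam * |ρ z * Real.log (ρ z)| := mul_nonneg hl0.le (abs_nonneg _)
      have b2 : 0 ≤ (1-lam) * |ρ' z * Real.log (ρ' z)| := mul_nonneg h1l.le (abs_nonneg _)
      linarith
    · have a1 : lam * (ρ z * Real.log (ρ z)) ≤ lam * |ρ z * Real.log (ρ z)| :=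
        mul_le_mul_of_nonneg_left (le_abs_self _) hl0.le
      have a2 : (1-lam) * (ρ' z * Real.log (ρ' z)) ≤ (1-lam) * |ρ' z * Real.log (ρ' z)| :=
        mul_le_mul_of_nonneg_left (le_abs_self _) h1l.le
      linarith
  -- gap identity
  have hgap : ∫ z, m z * Real.log (m z) ∂ν
      = lam * (∫ z, ρ z * Real.log (ρ z) ∂ν)
        + (1-lam) * (∫ z, ρ' z * Real.log (ρ' z) ∂ν)
        - lam * (∫ z, ρ z * (Real.log (ρ z) - Real.log (m z)) ∂ν)
        - (1-lam) * (∫ z, ρ' z * (Real.log (ρ' z) - Real.log (m z)) ∂ν) := by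
    have hae : ∀ᵐ z ∂ν, m z * Real.log (m z)
        = ((lam * (ρ z * Real.log (ρ z)) + (1-lam) * (ρ' z * Real.log (ρ' z)))
          - lam * (ρ z * (Real.log (ρ z) - Real.log (m z))))
          - (1-lam) * (ρ' z * (Real.log (ρ' z) - Real.log (m z))) := by
      filter_upwards [hposA, hposB] with z h1 h2
      simp only [hm]
      ring
    rw [integral_congr_ae hae]
    have i1 : Integrable (fun z => lam * (ρ z * Real.log (ρ z))) ν := hint1.const_mul lam
    have i2 : Integrable (fun z => (1-lam) * (ρ' z * Real.log (ρ' z))) ν :=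
      hint2.const_mul (1-lam)
    have i3 : Integrable (fun z => lam * (ρ z * (Real.log (ρ z) - Real.log (m z)))) ν :=
      hintf₁.const_mul lam
    have i4 : Integrable (fun z
        => (1-lam) * (ρ' z * (Real.log (ρ' z) - Real.log (m z)))) ν :=
      hintf₂.const_mul (1-lam)
    have i12 : Integrable (fun z => lam * (ρ z * Real.log (ρ z))
        + (1-lam) * (ρ' z * Real.log (ρ' z))) ν := i1.add i2
    have i123 : Integrable (fun z => (lam * (ρ z * Real.log (ρ z))
        + (1-lam) * (ρ' z * Real.log (ρ' z)))
        - lam * (ρ z * (Real.log (ρ z) - Real.log (m z)))) ν := i12.sub i3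
    have e0 : ∫ z, (((lam * (ρ z * Real.log (ρ z)) + (1-lam) * (ρ' z * Real.log (ρ' z)))
          - lam * (ρ z * (Real.log (ρ z) - Real.log (m z))))
          - (1-lam) * (ρ' z * (Real.log (ρ' z) - Real.log (m z)))) ∂ν
        = ∫ z, ((lam * (ρ z * Real.log (ρ z)) + (1-lam) * (ρ' z * Real.log (ρ' z)))
          - lam * (ρ z * (Real.log (ρ z) - Real.log (m z)))) ∂ν
          - ∫ z, (1-lam) * (ρ' z * (Real.log (ρ' z) - Real.log (m z))) ∂ν :=
      integral_sub i123 i4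
    have e1 : ∫ z, ((lam * (ρ z * Real.log (ρ z)) + (1-lam) * (ρ' z * Real.log (ρ' z)))
          - lam * (ρ z * (Real.log (ρ z) - Real.log (m z)))) ∂ν
        = ∫ z, (lam * (ρ z * Real.log (ρ z)) + (1-lam) * (ρ' z * Real.log (ρ' z))) ∂ν
          - ∫ z, lam * (ρ z * (Real.log (ρ z) - Real.log (m z))) ∂ν :=
      integral_sub i12 i3
    have e2 : ∫ z, (lam * (ρ z * Real.log (ρ z)) + (1-lam) * (ρ' z * Real.log (ρ' z))) ∂ν
        = ∫ z, lam * (ρ z * Real.log (ρ z)) ∂ν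
          + ∫ z, (1-lam) * (ρ' z * Real.log (ρ' z)) ∂ν :=
      integral_add i1 i2
    rw [e0, e1, e2, integral_const_mul, integral_const_mul, integral_const_mul,
      integral_const_mul]
  -- Pinsker for both components
  set S : ℝ := ∫ z, |ρ z - ρ' z| ∂ν with hS
  have hSnn : 0 ≤ S := integral_nonneg fun z => abs_nonneg _
  have habs1 : ∫ z, |ρ z - m z| ∂ν = (1-lam) * S := by
    rw [hS, ← integral_const_mul]
    apply integral_congr_ae
    filter_upwards with z
    rw [show ρ z - m z = (1-lam) * (ρ z - ρ' z) by simp only [hm]; ring, abs_mul,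
      abs_of_nonneg h1l.le]
  have habs2 : ∫ z, |ρ' z - m z| ∂ν = lam * S := by
    rw [hS, ← integral_const_mul]
    apply integral_congr_ae
    filter_upwards with z
    rw [show ρ' z - m z = lam * (ρ' z - ρ z) by simp only [hm]; ring, abs_mul,
      abs_of_nonneg hl0.le, abs_sub_comm]
  have hP1 := pinsker_integral ν ρ m hmeasA hmeasM hposA hposM hintA hintM hA1 hM1 hintf₁
  have hP2 := pinsker_integral ν ρ' m hmeasB hmeasM hposB hposM hintB hintM hB1 hM1 hintf₂
  rw [habs1] at hP1
  rw [habs2] at hP2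
  -- total variation bound
  have hD : Integrable (fun z => ρ z - ρ' z) ν := hintA.sub hintB
  have hD0 : ∫ z, (ρ z - ρ' z) ∂ν = 0 := by
    rw [integral_sub hintA hintB, hA1, hB1]; ring
  have hTbound : ∀ E : {A : Set (Fin d → ℝ) // MeasurableSet A},
      |(μ E.1).toReal - (μ' E.1).toReal| ≤ S/2 := by
    rintro ⟨E, hE⟩
    show |(μ E).toReal - (μ' E).toReal| ≤ S/2
    rw [hreprA E hE, hreprB E hE,
      ← integral_sub hintA.integrableOn hintB.integrableOn]
    have hcompl := integral_add_compl hE hD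
    rw [hD0] at hcompl
    have habsS := integral_add_compl hE hD.abs
    have h1' : |∫ z in E, (ρ z - ρ' z) ∂ν| ≤ ∫ z in E, |ρ z - ρ' z| ∂ν := by
      simpa [Real.norm_eq_abs] using
        norm_integral_le_integral_norm (μ := ν.restrict E) (fun z => ρ z - ρ' z)
    have h2' : |∫ z in Eᶜ, (ρ z - ρ' z) ∂ν| ≤ ∫ z in Eᶜ, |ρ z - ρ' z| ∂ν := by
      simpa [Real.norm_eq_abs] using
        norm_integral_le_integral_norm (μ := ν.restrict Eᶜ) (fun z => ρ z - ρ' z)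
    have hneg : ∫ z in E, (ρ z - ρ' z) ∂ν = -∫ z in Eᶜ, (ρ z - ρ' z) ∂ν := by linarith
    have h3' : |∫ z in E, (ρ z - ρ' z) ∂ν| ≤ ∫ z in Eᶜ, |ρ z - ρ' z| ∂ν := by
      rw [hneg, abs_neg]; exact h2'
    have : (fun z => |ρ z - ρ' z|) = fun z => |(fun y => ρ y - ρ' y) z| := rfl
    have hsum : (∫ z in E, |ρ z - ρ' z| ∂ν) + ∫ z in Eᶜ, |ρ z - ρ' z| ∂ν = S := habsS
    linarith [abs_nonneg (∫ z in E, (ρ z - ρ' z) ∂ν), h1', h3']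
  have hbdd : BddAbove (Set.range fun E : {A : Set (Fin d → ℝ) // MeasurableSet A}
      => |(μ E.1).toReal - (μ' E.1).toReal|) := by
    refine ⟨S/2, ?_⟩
    rintro x ⟨i, rfl⟩
    exact hTbound i
  have hT_le : tvDist μ μ' ≤ S/2 := Real.iSup_le hTbound (by linarith)
  have hT_nn : 0 ≤ tvDist μ μ' :=
    le_trans (abs_nonneg _) (le_ciSup hbdd ⟨∅, MeasurableSet.empty⟩)
  -- assemble
  have hgoal : (∫ z in Z, (lam * ρ z + (1 - lam) * ρ' z)
      * Real.log (lam * ρ z + (1 - lam) * ρ' z))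
      = ∫ z, m z * Real.log (m z) ∂ν := by
    simp only [hm]
    rfl
  rw [hgoal, hgap]
  have hT2 : (tvDist μ μ')^2 ≤ (S/2)^2 := by nlinarith [hT_le, hT_nn]
  have e3 : 2*lam*(1-lam)*(tvDist μ μ')^2 ≤ 2*lam*(1-lam)*(S/2)^2 :=
    mul_le_mul_of_nonneg_left hT2 (by nlinarith [mul_pos hl0 h1l])
  have e1 := mul_le_mul_of_nonneg_left hP1 hl0.le
  have e2 := mul_le_mul_of_nonneg_left hP2 h1l.le
  nlinarith [e1, e2, e3]


end

end Paper
end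

section
/- Lipschitz continuity of the Gibbs map in total variation: For all bounded measurable functions h, h' : Z → ℝ, the Gibbs measures satisfy dTV(Gibbs(h), Gibbs(h')) ≤ (1/2) ‖h − h'‖∞. -/
open MeasureTheory Real ENNReal

namespace Paper

noncomputable section

/-- Auxiliary: `e^M - 1 ≤ (M/2)(e^M + 1)` for `M ≥ 0` (equivalent to `tanh(M/2) ≤ M/2`). -/
lemma gibbs_key_ineq {M : ℝ} (hM : 0 ≤ M) : Real.exp M - 1 ≤ M / 2 * (Real.exp M + 1) := by
  set f : ℝ → ℝ := fun x => x / 2 * (Real.exp x + 1) - (Real.exp x - 1) with hf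
  have hd : ∀ x : ℝ, HasDerivAt f (1 / 2 * (Real.exp x + 1) + x / 2 * Real.exp x - Real.exp x) x := by
    intro x
    have h1 : HasDerivAt (fun x : ℝ => x / 2 * (Real.exp x + 1))
        (1 / 2 * (Real.exp x + 1) + x / 2 * Real.exp x) x := by
      have := ((hasDerivAt_id x).div_const 2).mul ((Real.hasDerivAt_exp x).add_const 1)
      simp at this ⊢; exact this
    have h2 := h1.sub ((Real.hasDerivAt_exp x).sub_const 1)
    simp at h2 ⊢; exact h2
  have hmono : MonotoneOn f (Set.Ici (0:ℝ)) := by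
    apply monotoneOn_of_deriv_nonneg (convex_Ici 0)
    · exact (Continuous.continuousOn (by continuity))
    · intro x _
      exact (hd x).differentiableAt.differentiableWithinAt
    · intro x _
      rw [(hd x).deriv]
      have h2 := mul_le_mul_of_nonneg_right (Real.add_one_le_exp (-x)) (Real.exp_pos x).le
      rw [← Real.exp_add] at h2
      simp only [neg_add_cancel, Real.exp_zero] at h2
      nlinarith
  have h0 : f 0 ≤ f M := hmono (Set.self_mem_Ici) hM hM
  simp only [hf, Real.exp_zero] at h0
  linarith

/-- Auxiliary scalar inequality behind the TV-Lipschitz bound. -/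
lemma gibbs_scalar_lemma {a b a' b' M t : ℝ} (ha : 0 ≤ a) (hb : 0 ≤ b) (ha' : 0 ≤ a')
    (hb' : 0 ≤ b') (hM : 0 ≤ M) (ht0 : 0 < t)
    (h1' : t * a ≤ a') (h2' : t * b' ≤ b) (hkey : 1 - t ≤ M / 2 * (1 + t)) :
    a * b' - a' * b ≤ M / 2 * ((a + b) * (a' + b')) := by
  have e1 : t * a^2 ≤ a * a' := by nlinarith
  have e2 : t * b'^2 ≤ b * b' := by nlinarith
  have e3 : t^2 * (a * b') ≤ a' * b := by nlinarith [mul_le_mul h1' h2' (by positivity) ha']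
  have e4 : 2 * t * (a * b') ≤ t * a^2 + t * b'^2 := by nlinarith [sq_nonneg (a - b')]
  have e5 : (1+t)^2 * (a * b') ≤ (a + b) * (a' + b') := by nlinarith [mul_nonneg ha hb']
  have e6 : a * b' - a' * b ≤ (1 - t^2) * (a * b') := by nlinarith [mul_nonneg ha hb']
  have e7 : (1 - t^2) * (a * b') ≤ M / 2 * ((1+t)^2 * (a * b')) := by
    nlinarith [mul_le_mul_of_nonneg_right hkey
      (mul_nonneg (mul_nonneg (by linarith : (0:ℝ) ≤ 1 + t) ha) hb')]
  have e8 : M / 2 * ((1+t)^2 * (a * b')) ≤ M / 2 * ((a + b) * (a' + b')) :=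
    mul_le_mul_of_nonneg_left e5 (by linarith)
  linarith

/-- Auxiliary: bound on the difference of normalized ratios. -/
lemma gibbs_ratio_lemma {a b a' b' M t : ℝ} (ha : 0 ≤ a) (hb : 0 ≤ b) (ha' : 0 ≤ a')
    (hb' : 0 ≤ b') (hM : 0 ≤ M) (ht0 : 0 < t)
    (hta : t * a ≤ a') (hta' : t * a' ≤ a) (htb : t * b ≤ b') (htb' : t * b' ≤ b)
    (hkey : 1 - t ≤ M / 2 * (1 + t)) (hI : 0 < a + b) (hI' : 0 < a' + b') :
    |a / (a + b) - a' / (a' + b')| ≤ 1 / 2 * M := by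
  rw [div_sub_div _ _ hI.ne' hI'.ne', abs_div, abs_of_pos (mul_pos hI hI'),
    div_le_iff₀ (mul_pos hI hI'), abs_le]
  constructor
  · have hs := gibbs_scalar_lemma ha' hb' ha hb hM ht0 hta' htb hkey
    nlinarith
  · have hs := gibbs_scalar_lemma ha hb ha' hb' hM ht0 hta htb' hkey
    nlinarith

/-- Auxiliary: divide an exponential comparison by `e^M`. -/
lemma gibbs_tmul_le {X Y M : ℝ} (h : X ≤ Real.exp M * Y) : Real.exp (-M) * X ≤ Y := by
  have ht0 : (0:ℝ) < Real.exp (-M) := Real.exp_pos _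
  have htm : Real.exp (-M) * Real.exp M = 1 := by rw [← Real.exp_add]; simp
  have h2 : Real.exp (-M) * (Real.exp M * Y) = Y := by rw [← mul_assoc, htm, one_mul]
  have h3 := mul_le_mul_of_nonneg_left h ht0.le
  linarith

/-- The value of a Gibbs measure on a measurable set, as a ratio of integrals. -/
lemma gibbs_apply {d : ℕ} {Z A : Set (Fin d → ℝ)} {h : (Fin d → ℝ) → ℝ}
    (hA : MeasurableSet A)
    (hint : Integrable (fun z => Real.exp (h z)) (volume.restrict Z))
    (hI : 0 < ∫ z in Z, Real.exp (h z)) :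
    ((gibbsMeasure Z h) A).toReal
      = (∫ z in A, Real.exp (h z) ∂(volume.restrict Z))
        / ((∫ z in A, Real.exp (h z) ∂(volume.restrict Z))
            + ∫ z in Aᶜ, Real.exp (h z) ∂(volume.restrict Z)) := by
  rw [gibbsMeasure, withDensity_apply _ hA]
  rw [← ofReal_integral_eq_lintegral_ofReal ((hint.div_const _).restrict)
    (Filter.Eventually.of_forall fun z => div_nonneg (Real.exp_pos _).le hI.le)]
  rw [ENNReal.toReal_ofReal (integral_nonneg fun z => div_nonneg (Real.exp_pos _).le hI.le)]
  rw [integral_div, integral_add_compl hA hint]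

/-- Lipschitz continuity of the Gibbs map in total variation. -/
theorem gibbs_tv_lipschitz
    (d : ℕ) (Z : Set (Fin d → ℝ)) (hZ : MeasurableSet Z)
    (hZ0 : volume Z ≠ 0) (hZfin : volume Z ≠ ⊤)
    (h h' : (Fin d → ℝ) → ℝ) (hhm : Measurable h) (hh'm : Measurable h')
    (hbd : ∃ C, ∀ z ∈ Z, |h z| ≤ C) (hbd' : ∃ C, ∀ z ∈ Z, |h' z| ≤ C) :
    tvDist (gibbsMeasure Z h) (gibbsMeasure Z h')
      ≤ (1 / 2) * supNormOn Z (fun z => h z - h' z) := by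
  classical
  obtain ⟨C, hC⟩ := hbd
  obtain ⟨C', hC'⟩ := hbd'
  haveI : IsFiniteMeasure (volume.restrict Z) :=
    ⟨by rw [Measure.restrict_apply_univ]; exact hZfin.lt_top⟩
  have hmem : ∀ᵐ z ∂(volume.restrict Z), z ∈ Z := ae_restrict_mem hZ
  -- Integrability of the exponential densities
  have hint : Integrable (fun z => Real.exp (h z)) (volume.restrict Z) := by
    refine Integrable.mono' (integrable_const (Real.exp C)) (hhm.exp.aestronglyMeasurable) ?_
    filter_upwards [hmem] with z hz
    rw [Real.norm_eq_abs, abs_of_pos (Real.exp_pos _)]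
    exact Real.exp_le_exp.mpr (le_trans (le_abs_self _) (hC z hz))
  have hint' : Integrable (fun z => Real.exp (h' z)) (volume.restrict Z) := by
    refine Integrable.mono' (integrable_const (Real.exp C')) (hh'm.exp.aestronglyMeasurable) ?_
    filter_upwards [hmem] with z hz
    rw [Real.norm_eq_abs, abs_of_pos (Real.exp_pos _)]
    exact Real.exp_le_exp.mpr (le_trans (le_abs_self _) (hC' z hz))
  -- Positivity of the partition functions
  have hvol : 0 < (volume Z).toReal := ENNReal.toReal_pos hZ0 hZfin
  have hIpos : 0 < ∫ z in Z, Real.exp (h z) := by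
    have hle : (volume Z).toReal * Real.exp (-C) ≤ ∫ z in Z, Real.exp (h z) := by
      have := integral_mono_ae (integrable_const (Real.exp (-C))) hint ?_
      · simpa [Measure.restrict_apply_univ, smul_eq_mul, Measure.real] using this
      · filter_upwards [hmem] with z hz
        exact Real.exp_le_exp.mpr (by have := (abs_le.mp (hC z hz)).1; linarith)
    have h0 : (0:ℝ) < (volume Z).toReal * Real.exp (-C) := by positivity
    linarith
  have hIpos' : 0 < ∫ z in Z, Real.exp (h' z) := by
    have hle : (volume Z).toReal * Real.exp (-C') ≤ ∫ z in Z, Real.exp (h' z) := by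
      have := integral_mono_ae (integrable_const (Real.exp (-C'))) hint' ?_
      · simpa [Measure.restrict_apply_univ, smul_eq_mul, Measure.real] using this
      · filter_upwards [hmem] with z hz
        exact Real.exp_le_exp.mpr (by have := (abs_le.mp (hC' z hz)).1; linarith)
    have h0 : (0:ℝ) < (volume Z).toReal * Real.exp (-C') := by positivity
    linarith
  -- The essential sup bound
  set M := supNormOn Z (fun z => h z - h' z) with hMdef
  have hM0 : 0 ≤ M := ENNReal.toReal_nonneg
  have hEss : essSup (fun z => ENNReal.ofReal |h z - h' z|) (volume.restrict Z) ≠ ⊤ := by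
    refine ne_top_of_le_ne_top (b := ENNReal.ofReal (C + C')) ENNReal.ofReal_ne_top ?_
    refine essSup_le_of_ae_le _ ?_
    filter_upwards [hmem] with z hz
    exact ENNReal.ofReal_le_ofReal (le_trans (abs_sub _ _)
      (add_le_add (hC z hz) (hC' z hz)))
  have hδ : ∀ᵐ z ∂(volume.restrict Z), |h z - h' z| ≤ M := by
    filter_upwards [ENNReal.ae_le_essSup
      (fun z => ENNReal.ofReal |h z - h' z|) (μ := volume.restrict Z)] with z hz
    have := ENNReal.toReal_mono hEss hz
    rwa [ENNReal.toReal_ofReal (abs_nonneg _)] at this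
  -- pointwise domination both ways
  have hdom : ∀ᵐ z ∂(volume.restrict Z), Real.exp (h z) ≤ Real.exp M * Real.exp (h' z) := by
    filter_upwards [hδ] with z hz
    rw [← Real.exp_add]
    exact Real.exp_le_exp.mpr (by have := (abs_le.mp hz).2; linarith)
  have hdom' : ∀ᵐ z ∂(volume.restrict Z), Real.exp (h' z) ≤ Real.exp M * Real.exp (h z) := by
    filter_upwards [hδ] with z hz
    rw [← Real.exp_add]
    exact Real.exp_le_exp.mpr (by have := (abs_le.mp hz).1; linarith)
  -- the comparison inequalities on any subset
  have cmp : ∀ (S : Set (Fin d → ℝ)),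
      (∫ z in S, Real.exp (h z) ∂(volume.restrict Z))
        ≤ Real.exp M * ∫ z in S, Real.exp (h' z) ∂(volume.restrict Z) := by
    intro S
    have h1 := integral_mono_ae (hint.restrict (s := S))
      ((hint'.restrict (s := S)).const_mul (Real.exp M)) (ae_restrict_of_ae hdom)
    simpa [integral_const_mul] using h1
  have cmp' : ∀ (S : Set (Fin d → ℝ)),
      (∫ z in S, Real.exp (h' z) ∂(volume.restrict Z))
        ≤ Real.exp M * ∫ z in S, Real.exp (h z) ∂(volume.restrict Z) := by
    intro S
    have h1 := integral_mono_ae (hint'.restrict (s := S))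
      ((hint.restrict (s := S)).const_mul (Real.exp M)) (ae_restrict_of_ae hdom')
    simpa [integral_const_mul] using h1
  have hkey : 1 - Real.exp (-M) ≤ M / 2 * (1 + Real.exp (-M)) := by
    have h3 := gibbs_key_ineq hM0
    have h4 := mul_le_mul_of_nonneg_left h3 (Real.exp_pos (-M)).le
    have htm : Real.exp (-M) * Real.exp M = 1 := by rw [← Real.exp_add]; simp
    nlinarith
  -- sup over measurable sets
  haveI : Nonempty {A : Set (Fin d → ℝ) // MeasurableSet A} := ⟨⟨∅, MeasurableSet.empty⟩⟩
  rw [tvDist]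
  apply ciSup_le
  rintro ⟨A, hA⟩
  rw [gibbs_apply hA hint hIpos, gibbs_apply hA hint' hIpos']
  have hI : 0 < (∫ z in A, Real.exp (h z) ∂(volume.restrict Z))
      + ∫ z in Aᶜ, Real.exp (h z) ∂(volume.restrict Z) := by
    rw [integral_add_compl hA hint]; exact hIpos
  have hI' : 0 < (∫ z in A, Real.exp (h' z) ∂(volume.restrict Z))
      + ∫ z in Aᶜ, Real.exp (h' z) ∂(volume.restrict Z) := by
    rw [integral_add_compl hA hint']; exact hIpos'
  exact gibbs_ratio_lemma
    (integral_nonneg fun z => (Real.exp_pos _).le)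
    (integral_nonneg fun z => (Real.exp_pos _).le)
    (integral_nonneg fun z => (Real.exp_pos _).le)
    (integral_nonneg fun z => (Real.exp_pos _).le)
    hM0 (Real.exp_pos (-M))
    (gibbs_tmul_le (cmp A)) (gibbs_tmul_le (cmp' A))
    (gibbs_tmul_le (cmp Aᶜ)) (gibbs_tmul_le (cmp' Aᶜ))
    hkey hI hI'

end

end Paper
end

section
/- Smoothness of the log-partition functional: For all bounded measurable functions h, h' : Z → ℝ, one has Φ*(h) ≤ Φ*(h') + ∫_Z (h − h') dGibbs(h') + (1/2) ‖h − h'‖∞². -/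
open MeasureTheory Real ENNReal

namespace Paper

noncomputable section

open Metric in
private lemma mgf_core {α : Type*} [MeasurableSpace α] (ν : Measure α) [IsProbabilityMeasure ν]
    (g : α → ℝ) (hg : Measurable g) (M : ℝ) (hM : 0 ≤ M)
    (hb : ∀ᵐ z ∂ν, |g z| ≤ M) :
    Real.log (∫ z, Real.exp (g z) ∂ν) ≤ (∫ z, g z ∂ν) + M ^ 2 / 2 := by
  -- integrability of bounded measurable functions
  have hint : ∀ (u : α → ℝ) (K : ℝ), Measurable u → (∀ᵐ z ∂ν, ‖u z‖ ≤ K) →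
      Integrable u ν := fun u K hu h =>
    (integrable_const K).mono' hu.aestronglyMeasurable h
  set B : ℝ → ℝ := fun t => ∫ z, Real.exp (t * g z) ∂ν with hBdef
  set N : ℝ → ℝ := fun t => ∫ z, Real.exp (t * g z) * g z ∂ν with hNdef
  set Q : ℝ → ℝ := fun t => ∫ z, Real.exp (t * g z) * g z * g z ∂ν with hQdef
  -- a.e. bounds
  have hexp_bound : ∀ (t : ℝ), ∀ᵐ z ∂ν, ‖Real.exp (t * g z)‖ ≤ Real.exp (|t| * M) := by
    intro t
    filter_upwards [hb] with z hz
    rw [Real.norm_eq_abs, abs_of_pos (Real.exp_pos _)]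
    apply Real.exp_le_exp.2
    calc t * g z ≤ |t * g z| := le_abs_self _
      _ = |t| * |g z| := abs_mul _ _
      _ ≤ |t| * M := by nlinarith [abs_nonneg t, abs_nonneg (g z)]
  have hintB : ∀ t, Integrable (fun z => Real.exp (t * g z)) ν := fun t =>
    hint _ _ (by fun_prop) (hexp_bound t)
  have hintN : ∀ t, Integrable (fun z => Real.exp (t * g z) * g z) ν := by
    intro t
    refine hint _ (Real.exp (|t| * M) * M) (by fun_prop) ?_
    filter_upwards [hexp_bound t, hb] with z h1 h2
    rw [norm_mul, Real.norm_eq_abs (g z)]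
    exact mul_le_mul h1 h2 (abs_nonneg _) (Real.exp_pos _).le
  have hintQ : ∀ t, Integrable (fun z => Real.exp (t * g z) * g z * g z) ν := by
    intro t
    refine hint _ (Real.exp (|t| * M) * M * M) (by fun_prop) ?_
    filter_upwards [hexp_bound t, hb] with z h1 h2
    rw [norm_mul, norm_mul, Real.norm_eq_abs (g z)]
    exact mul_le_mul (mul_le_mul h1 h2 (abs_nonneg _) (Real.exp_pos _).le) h2 (abs_nonneg _)
      (by positivity)
  -- positivity of B
  have hBpos : ∀ t, 0 < B t := by
    intro t
    have hlow : ∀ᵐ z ∂ν, Real.exp (-(|t| * M)) ≤ Real.exp (t * g z) := by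
      filter_upwards [hb] with z hz
      apply Real.exp_le_exp.2
      have : |t * g z| ≤ |t| * M := by
        rw [abs_mul]; nlinarith [abs_nonneg t, abs_nonneg (g z)]
      nlinarith [neg_abs_le (t * g z)]
    have := integral_mono_ae (integrable_const _) (hintB t) hlow
    simp only [integral_const, measure_univ, ENNReal.toReal_one, probReal_univ, one_smul] at this
    exact lt_of_lt_of_le (Real.exp_pos _) this
  -- derivative of B is N
  have hB : ∀ t, HasDerivAt B (N t) t := by
    intro t
    have := hasDerivAt_integral_of_dominated_loc_of_deriv_le (μ := ν)
      (F := fun s z => Real.exp (s * g z))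
      (F' := fun s z => Real.exp (s * g z) * g z)
      (x₀ := t) (bound := fun _ => Real.exp ((|t| + 1) * M) * M)
      (Metric.ball_mem_nhds t one_pos)
      (Filter.Eventually.of_forall fun s => (by fun_prop : Measurable fun z => Real.exp (s * g z)).aestronglyMeasurable)
      (hintB t) ((by fun_prop : Measurable fun z => Real.exp (t * g z) * g z).aestronglyMeasurable)
      ?_ (integrable_const _) ?_
    · exact this.2
    · filter_upwards [hb] with z hz s hs
      rw [norm_mul]
      have hs' : |s| ≤ |t| + 1 := by
        rw [mem_ball, Real.dist_eq] at hs
        calc |s| = |t + (s - t)| := by ring_nf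
          _ ≤ |t| + |s - t| := abs_add_le _ _
          _ ≤ |t| + 1 := by linarith
      have h1 : ‖Real.exp (s * g z)‖ ≤ Real.exp ((|t| + 1) * M) := by
        rw [Real.norm_eq_abs, abs_of_pos (Real.exp_pos _)]
        apply Real.exp_le_exp.2
        calc s * g z ≤ |s * g z| := le_abs_self _
          _ = |s| * |g z| := abs_mul _ _
          _ ≤ (|t| + 1) * M := by nlinarith [abs_nonneg s, abs_nonneg (g z), abs_nonneg t]
      exact mul_le_mul h1 hz (abs_nonneg _) (Real.exp_pos _).le
    · refine Filter.Eventually.of_forall fun z s _ => ?_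
      simpa using ((hasDerivAt_id s).mul_const (g z)).exp
  -- derivative of N is Q
  have hN : ∀ t, HasDerivAt N (Q t) t := by
    intro t
    have := hasDerivAt_integral_of_dominated_loc_of_deriv_le (μ := ν)
      (F := fun s z => Real.exp (s * g z) * g z)
      (F' := fun s z => Real.exp (s * g z) * g z * g z)
      (x₀ := t) (bound := fun _ => Real.exp ((|t| + 1) * M) * M * M)
      (Metric.ball_mem_nhds t one_pos)
      (Filter.Eventually.of_forall fun s => (by fun_prop : Measurable fun z => Real.exp (s * g z) * g z).aestronglyMeasurable)
      (hintN t) ((by fun_prop : Measurable fun z => Real.exp (t * g z) * g z * g z).aestronglyMeasurable)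
      ?_ (integrable_const _) ?_
    · exact this.2
    · filter_upwards [hb] with z hz s hs
      rw [norm_mul, norm_mul]
      have hs' : |s| ≤ |t| + 1 := by
        rw [mem_ball, Real.dist_eq] at hs
        calc |s| = |t + (s - t)| := by ring_nf
          _ ≤ |t| + |s - t| := abs_add_le _ _
          _ ≤ |t| + 1 := by linarith
      have h1 : ‖Real.exp (s * g z)‖ ≤ Real.exp ((|t| + 1) * M) := by
        rw [Real.norm_eq_abs, abs_of_pos (Real.exp_pos _)]
        apply Real.exp_le_exp.2
        calc s * g z ≤ |s * g z| := le_abs_self _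
          _ = |s| * |g z| := abs_mul _ _
          _ ≤ (|t| + 1) * M := by nlinarith [abs_nonneg s, abs_nonneg (g z), abs_nonneg t]
      rw [Real.norm_eq_abs (g z)]
      exact mul_le_mul (mul_le_mul h1 hz (abs_nonneg _) (Real.exp_pos _).le) hz (abs_nonneg _)
        (by positivity)
    · refine Filter.Eventually.of_forall fun z s _ => ?_
      exact (((hasDerivAt_id s).mul_const (g z)).exp.mul_const (g z)).congr_deriv (by simp)
  have hB0 : B 0 = 1 := by simp [hBdef]
  have hN0 : N 0 = ∫ z, g z ∂ν := by simp [hNdef]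
  have hQle : ∀ t, Q t ≤ M ^ 2 * B t := by
    intro t
    have hae : ∀ᵐ z ∂ν, Real.exp (t * g z) * g z * g z ≤ M ^ 2 * Real.exp (t * g z) := by
      filter_upwards [hb] with z hz
      have he := Real.exp_pos (t * g z)
      have hg2 : g z * g z ≤ M ^ 2 := by nlinarith [abs_mul_abs_self (g z), abs_nonneg (g z)]
      nlinarith [mul_nonneg (sub_nonneg.2 hg2) he.le]
    have h2 := integral_mono_ae (hintQ t) ((hintB t).const_mul (M ^ 2)) hae
    calc Q t ≤ ∫ z, M ^ 2 * Real.exp (t * g z) ∂ν := h2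
      _ = M ^ 2 * B t := by rw [integral_const_mul]
  have hD : ∀ t, HasDerivAt (fun s => N s / B s)
      ((Q t * B t - N t * N t) / B t ^ 2) t := fun t => (hN t).div (hB t) (hBpos t).ne'
  set φ1 : ℝ → ℝ := fun t => N 0 + M ^ 2 * t - N t / B t with hφ1def
  have hφ1d : ∀ t, HasDerivAt φ1 (M ^ 2 - (Q t * B t - N t * N t) / B t ^ 2) t := by
    intro t
    have h1 : HasDerivAt (fun s => N 0 + M ^ 2 * s) (M ^ 2) t := by
      simpa using ((hasDerivAt_id t).const_mul (M ^ 2)).const_add (N 0)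
    exact h1.sub (hD t)
  have hφ1nonneg : ∀ t, 0 ≤ t → 0 ≤ φ1 t := by
    have hmono : Monotone φ1 := by
      apply monotone_of_deriv_nonneg (fun t => (hφ1d t).differentiableAt)
      intro t
      rw [(hφ1d t).deriv]
      have h1 : (Q t * B t - N t * N t) / B t ^ 2 ≤ M ^ 2 := by
        rw [div_le_iff₀ (pow_pos (hBpos t) 2)]
        nlinarith [hQle t, hBpos t, sq_nonneg (N t)]
      linarith
    intro t ht
    have h0 : φ1 0 = 0 := by
      simp [hφ1def, hB0]
    calc (0:ℝ) = φ1 0 := h0.symm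
      _ ≤ φ1 t := hmono ht
  set φ : ℝ → ℝ := fun t => N 0 * t + M ^ 2 / 2 * t ^ 2 - Real.log (B t) with hφdef
  have hφd : ∀ t, HasDerivAt φ (φ1 t) t := by
    intro t
    have h1 : HasDerivAt (fun s : ℝ => N 0 * s + M ^ 2 / 2 * s ^ 2)
        (N 0 + M ^ 2 * t) t := by
      have := ((hasDerivAt_id t).const_mul (N 0)).add
        ((hasDerivAt_pow 2 t).const_mul (M ^ 2 / 2))
      exact this.congr_deriv (by rw [show (2:ℕ) - 1 = 1 from rfl]; ring)
    have h2 := (hB t).log (hBpos t).ne'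
    exact h1.sub h2
  have hφmono : MonotoneOn φ (Set.Icc (0:ℝ) 1) := by
    apply monotoneOn_of_deriv_nonneg (convex_Icc _ _)
    · exact Continuous.continuousOn (by
        have : Differentiable ℝ φ := fun t => (hφd t).differentiableAt
        exact this.continuous)
    · exact fun x _ => ((hφd x).differentiableAt).differentiableWithinAt
    · intro x hx
      rw [(hφd x).deriv]
      rw [interior_Icc] at hx
      exact hφ1nonneg x hx.1.le
  have h01 : φ 0 ≤ φ 1 := hφmono (Set.mem_Icc.2 ⟨le_refl 0, zero_le_one⟩)
    (Set.mem_Icc.2 ⟨zero_le_one, le_refl 1⟩) zero_le_one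
  have hφ0 : φ 0 = 0 := by simp [hφdef, hB0]
  have hB1 : B 1 = ∫ z, Real.exp (g z) ∂ν := by simp [hBdef]
  have : Real.log (B 1) ≤ N 0 + M ^ 2 / 2 := by
    have heq : φ 1 = N 0 + M ^ 2 / 2 - Real.log (B 1) := by
      simp only [hφdef, one_pow, mul_one]
    have h2 : (0:ℝ) ≤ φ 1 := hφ0 ▸ h01
    rw [heq] at h2
    linarith
  rw [hB1, hN0] at this
  linarith

/-- smoothness of the log-partition functional. -/
theorem logPart_smooth
    (d : ℕ) (Z : Set (Fin d → ℝ)) (hZ : MeasurableSet Z)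
    (hZ0 : volume Z ≠ 0) (hZfin : volume Z ≠ ⊤)
    (h h' : (Fin d → ℝ) → ℝ) (hhm : Measurable h) (hh'm : Measurable h')
    (hbd : ∃ C, ∀ z ∈ Z, |h z| ≤ C) (hbd' : ∃ C, ∀ z ∈ Z, |h' z| ≤ C) :
    logPart Z h ≤ logPart Z h' + (∫ z, (h z - h' z) ∂(gibbsMeasure Z h'))
        + (1 / 2) * (supNormOn Z (fun z => h z - h' z)) ^ 2 := by
  classical
  obtain ⟨C, hC⟩ := hbd
  obtain ⟨C', hC'⟩ := hbd'
  set f : (Fin d → ℝ) → ℝ := fun z => h z - h' z with hfdef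
  have hfm : Measurable f := hhm.sub hh'm
  have hres : IsFiniteMeasure (volume.restrict Z) :=
    ⟨by rwa [Measure.restrict_apply_univ, lt_top_iff_ne_top]⟩
  have haemem := ae_restrict_mem (μ := volume) hZ
  have hfbd : ∀ z ∈ Z, |f z| ≤ C + C' := by
    intro z hz
    have := hC z hz; have := hC' z hz
    simp only [hfdef]
    calc |h z - h' z| ≤ |h z| + |h' z| := abs_sub _ _
      _ ≤ C + C' := by linarith
  set M : ℝ := supNormOn Z f with hMdef
  have hM0 : 0 ≤ M := ENNReal.toReal_nonneg
  have hessle : essSup (fun z => ENNReal.ofReal |f z|) (volume.restrict Z)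
      ≤ ENNReal.ofReal (C + C') := by
    refine essSup_le_of_ae_le _ ?_
    filter_upwards [haemem] with z hz
    exact ENNReal.ofReal_le_ofReal (hfbd z hz)
  have hesstop : essSup (fun z => ENNReal.ofReal |f z|) (volume.restrict Z) ≠ ⊤ :=
    (lt_of_le_of_lt hessle ENNReal.ofReal_lt_top).ne
  have haeM : ∀ᵐ z ∂(volume.restrict Z), |f z| ≤ M := by
    filter_upwards [ae_le_essSup (fun z => ENNReal.ofReal |f z|)] with z hz
    have h1 := ENNReal.toReal_mono hesstop hz
    rwa [ENNReal.toReal_ofReal (abs_nonneg _)] at h1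
  -- the normalizing constant S
  set S : ℝ := ∫ y in Z, Real.exp (h' y) with hSdef
  have hintS : Integrable (fun z => Real.exp (h' z)) (volume.restrict Z) := by
    refine (integrable_const (Real.exp C')).mono' hh'm.exp.aestronglyMeasurable ?_
    filter_upwards [haemem] with z hz
    rw [Real.norm_eq_abs, abs_of_pos (Real.exp_pos _)]
    exact Real.exp_le_exp.2 (le_trans (le_abs_self _) (hC' z hz))
  have hvolpos : 0 < (volume Z).toReal := ENNReal.toReal_pos hZ0 hZfin
  have hSpos : 0 < S := by
    have hlow : ∀ᵐ z ∂(volume.restrict Z), Real.exp (-C') ≤ Real.exp (h' z) := by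
      filter_upwards [haemem] with z hz
      exact Real.exp_le_exp.2 (by linarith [neg_abs_le (h' z), hC' z hz])
    have := integral_mono_ae (integrable_const _) hintS hlow
    rw [setIntegral_const] at this
    calc (0:ℝ) < (volume Z).toReal • Real.exp (-C') := by
          rw [smul_eq_mul]; positivity
      _ ≤ S := this
  -- the Gibbs measure is a probability measure
  set ν : Measure (Fin d → ℝ) := gibbsMeasure Z h' with hνdef
  have hdens_nonneg : ∀ z, (0:ℝ) ≤ Real.exp (h' z) / S := fun z => by positivity
  have hνprob : IsProbabilityMeasure ν := by
    constructor
    rw [hνdef, gibbsMeasure, withDensity_apply _ MeasurableSet.univ,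
      Measure.restrict_univ]
    rw [← ofReal_integral_eq_lintegral_ofReal (hintS.div_const S)
      (Filter.Eventually.of_forall hdens_nonneg)]
    rw [integral_div, ← hSdef, div_self hSpos.ne']
    exact ENNReal.ofReal_one
  -- integrals against ν
  have hν_int : ∀ (u : (Fin d → ℝ) → ℝ), Measurable u →
      ∫ z, u z ∂ν = ∫ z in Z, (Real.exp (h' z) / S) * u z := by
    intro u hu
    have hmeas : Measurable (fun z => (Real.exp (h' z) / S).toNNReal) := by
      exact (hh'm.exp.div_const S).real_toNNReal
    have : ν = (volume.restrict Z).withDensity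
        (fun z => ((Real.exp (h' z) / S).toNNReal : ℝ≥0∞)) := rfl
    rw [this, integral_withDensity_eq_integral_smul hmeas u]
    congr 1
    funext z
    rw [NNReal.smul_def, Real.coe_toNNReal _ (hdens_nonneg z), smul_eq_mul]
  -- a.e. bound under ν
  have haeMν : ∀ᵐ z ∂ν, |f z| ≤ M := by
    have habs : ν ≪ volume.restrict Z := withDensity_absolutelyContinuous _ _
    exact habs.ae_le haeM
  -- apply the core lemma
  have hcore := mgf_core ν f hfm M hM0 haeMν
  -- identify ∫ exp f dν
  have hinth : Integrable (fun z => Real.exp (h z)) (volume.restrict Z) := by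
    refine (integrable_const (Real.exp C)).mono' hhm.exp.aestronglyMeasurable ?_
    filter_upwards [haemem] with z hz
    rw [Real.norm_eq_abs, abs_of_pos (Real.exp_pos _)]
    exact Real.exp_le_exp.2 (le_trans (le_abs_self _) (hC z hz))
  have hTpos : 0 < ∫ z in Z, Real.exp (h z) := by
    have hlow : ∀ᵐ z ∂(volume.restrict Z), Real.exp (-C) ≤ Real.exp (h z) := by
      filter_upwards [haemem] with z hz
      exact Real.exp_le_exp.2 (by linarith [neg_abs_le (h z), hC z hz])
    have := integral_mono_ae (integrable_const _) hinth hlow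
    rw [setIntegral_const] at this
    calc (0:ℝ) < (volume Z).toReal • Real.exp (-C) := by
          rw [smul_eq_mul]; positivity
      _ ≤ _ := this
  have hexpf : ∫ z, Real.exp (f z) ∂ν = (∫ z in Z, Real.exp (h z)) / S := by
    rw [hν_int _ hfm.exp]
    rw [show (fun z => (Real.exp (h' z) / S) * Real.exp (f z))
        = fun z => Real.exp (h z) / S from funext fun z => by
      rw [div_mul_eq_mul_div, ← Real.exp_add]
      simp [hfdef]]
    rw [integral_div]
  -- conclude
  have hgoal : Real.log ((∫ z in Z, Real.exp (h z)) / S)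
      ≤ (∫ z, f z ∂ν) + M ^ 2 / 2 := by
    rw [← hexpf]; exact hcore
  rw [Real.log_div hTpos.ne' hSpos.ne'] at hgoal
  have : logPart Z h = Real.log (∫ z in Z, Real.exp (h z)) := rfl
  have h2 : logPart Z h' = Real.log S := rfl
  rw [this, h2]
  have : (∫ z, (h z - h' z) ∂(gibbsMeasure Z h')) = ∫ z, f z ∂ν := rfl
  rw [this]
  linarith


end

end Paper
end

section
/- Regret bound for infinite-dimensional entropic mirror descent: Let η > 0, let M ≥ 0, let h₁, …, h_T : Z → ℝ be bounded measurable with ‖h_t‖∞ ≤ M for all t, let μ₁ ∈ M(Z), and define recursively μ_{t+1} = MD_η(μ_t, h_t). Then for every μ ∈ M(Z) with KL(μ‖μ₁) < ∞: Σ_{t=1}^T (∫_Z h_t dμ_t − ∫_Z h_t dμ) ≤ KL(μ‖μ₁)/η + η M² T / 2. -/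
open MeasureTheory Real ENNReal

namespace Paper

noncomputable section

open scoped NNReal

open Metric in
/-- integrability helper: bounded measurable times exp of bounded. -/
lemma aux_integrable {α : Type*} [MeasurableSpace α] (ν : Measure α)
    [IsProbabilityMeasure ν] {h : α → ℝ}
    (hm : Measurable h) {M : ℝ} (hM0 : 0 ≤ M) (hM : ∀ᵐ z ∂ν, |h z| ≤ M)
    (k : ℕ) (s : ℝ) :
    Integrable (fun z => h z ^ k * Real.exp (s * h z)) ν := by
  refine Integrable.mono' (integrable_const (M ^ k * Real.exp (|s| * M)))
    ((hm.pow_const k).mul ((hm.const_mul s).exp)).aestronglyMeasurable ?_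
  filter_upwards [hM] with z hz
  rw [Real.norm_eq_abs, abs_mul, abs_pow]
  have e2 : |Real.exp (s * h z)| ≤ Real.exp (|s| * M) := by
    rw [abs_of_pos (Real.exp_pos _)]
    apply Real.exp_le_exp.2
    calc s * h z ≤ |s * h z| := le_abs_self _
      _ = |s| * |h z| := abs_mul _ _
      _ ≤ |s| * M := mul_le_mul_of_nonneg_left hz (abs_nonneg s)
  exact mul_le_mul (pow_le_pow_left₀ (abs_nonneg _) hz k) e2 (abs_nonneg _)
    (pow_nonneg hM0 k)

open Metric in
/-- Key Hoeffding-type bound on the cumulant generating function. -/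
lemma cgf_bound {α : Type*} [MeasurableSpace α] (ν : Measure α)
    [IsProbabilityMeasure ν] {h : α → ℝ}
    (hm : Measurable h) {M : ℝ} (hM0 : 0 ≤ M) (hM : ∀ᵐ z ∂ν, |h z| ≤ M)
    {s : ℝ} (hs : 0 ≤ s) :
    Real.log (∫ z, Real.exp (-s * h z) ∂ν)
      ≤ -s * (∫ z, h z ∂ν) + s ^ 2 * M ^ 2 / 2 := by
  set g : ℝ → ℝ := fun x => ∫ z, Real.exp (-x * h z) ∂ν with hg_def
  set g1 : ℝ → ℝ := fun x => ∫ z, -h z * Real.exp (-x * h z) ∂ν with hg1_def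
  set g2 : ℝ → ℝ := fun x => ∫ z, h z ^ 2 * Real.exp (-x * h z) ∂ν with hg2_def
  have hint0 : ∀ x : ℝ, Integrable (fun z => Real.exp (-x * h z)) ν := by
    intro x
    simpa using aux_integrable ν hm hM0 hM 0 (-x)
  have hint1 : ∀ x : ℝ, Integrable (fun z => -h z * Real.exp (-x * h z)) ν := by
    intro x
    have heq : (fun z => -h z * Real.exp (-x * h z))
        = fun z => (-1 : ℝ) * (h z ^ 1 * Real.exp (-x * h z)) := by
      funext z; ring
    rw [heq]
    exact (aux_integrable ν hm hM0 hM 1 (-x)).const_mul _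
  have hint2 : ∀ x : ℝ, Integrable (fun z => h z ^ 2 * Real.exp (-x * h z)) ν := by
    intro x
    simpa using aux_integrable ν hm hM0 hM 2 (-x)
  have hptderiv : ∀ (z : α) (x : ℝ),
      HasDerivAt (fun x => Real.exp (-x * h z)) (-h z * Real.exp (-x * h z)) x := by
    intro z x
    have h1 : HasDerivAt (fun x : ℝ => -x * h z) (-1 * h z) x :=
      ((hasDerivAt_id x).neg).mul_const (h z)
    convert h1.exp using 1
    ring
  have hptderiv2 : ∀ (z : α) (x : ℝ),
      HasDerivAt (fun x => -h z * Real.exp (-x * h z))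
        (h z ^ 2 * Real.exp (-x * h z)) x := by
    intro z x
    exact ((hptderiv z x).const_mul (-h z)).congr_deriv (by ring)
  have hxball : ∀ x₀ x : ℝ, x ∈ ball x₀ 1 → |x| ≤ |x₀| + 1 := by
    intro x₀ x hx
    have h1 : |x - x₀| < 1 := by simpa [Real.norm_eq_abs] using mem_ball_iff_norm.1 hx
    calc |x| = |x - x₀ + x₀| := by ring_nf
      _ ≤ |x - x₀| + |x₀| := abs_add_le _ _
      _ ≤ |x₀| + 1 := by linarith
  have hexpbound : ∀ (x₀ x : ℝ), x ∈ ball x₀ 1 → ∀ z, |h z| ≤ M →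
      |Real.exp (-x * h z)| ≤ Real.exp ((|x₀| + 1) * M) := by
    intro x₀ x hx z hz
    rw [abs_of_pos (Real.exp_pos _)]
    apply Real.exp_le_exp.2
    calc -x * h z ≤ |(-x) * h z| := le_abs_self _
      _ = |x| * |h z| := by rw [abs_mul, abs_neg]
      _ ≤ (|x₀| + 1) * M := mul_le_mul (hxball x₀ x hx) hz (abs_nonneg _)
          (by positivity)
  have hgpos : ∀ x : ℝ, 0 < g x := by
    intro x
    have hmono : (fun _ : α => Real.exp (-(|x| * M))) ≤ᵐ[ν]
        fun z => Real.exp (-x * h z) := by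
      filter_upwards [hM] with z hz
      apply Real.exp_le_exp.2
      rw [neg_le, neg_mul, neg_neg]
      calc x * h z ≤ |x * h z| := le_abs_self _
        _ = |x| * |h z| := abs_mul _ _
        _ ≤ |x| * M := mul_le_mul_of_nonneg_left hz (abs_nonneg x)
    have hle := integral_mono_ae (integrable_const _) (hint0 x) hmono
    calc (0:ℝ) < Real.exp (-(|x| * M)) := Real.exp_pos _
      _ = ∫ _ : α, Real.exp (-(|x| * M)) ∂ν := by simp
      _ ≤ g x := hle
  have hg : ∀ x : ℝ, HasDerivAt g (g1 x) x := by
    intro x₀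
    refine (hasDerivAt_integral_of_dominated_loc_of_deriv_le (μ := ν)
      (F := fun x z => Real.exp (-x * h z))
      (F' := fun x z => -h z * Real.exp (-x * h z))
      (bound := fun _ => M * Real.exp ((|x₀| + 1) * M)) (ball_mem_nhds x₀ one_pos)
      (Filter.Eventually.of_forall fun x => (hint0 x).aestronglyMeasurable)
      (hint0 x₀) (hint1 x₀).aestronglyMeasurable ?_ (integrable_const _)
      (Filter.Eventually.of_forall fun z x _ => hptderiv z x)).2
    filter_upwards [hM] with z hz x hx
    rw [Real.norm_eq_abs, abs_mul, abs_neg]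
    exact mul_le_mul hz (hexpbound x₀ x hx z hz) (abs_nonneg _) hM0
  have hg1 : ∀ x : ℝ, HasDerivAt g1 (g2 x) x := by
    intro x₀
    refine (hasDerivAt_integral_of_dominated_loc_of_deriv_le (μ := ν)
      (F := fun x z => -h z * Real.exp (-x * h z))
      (F' := fun x z => h z ^ 2 * Real.exp (-x * h z))
      (bound := fun _ => M ^ 2 * Real.exp ((|x₀| + 1) * M)) (ball_mem_nhds x₀ one_pos)
      (Filter.Eventually.of_forall fun x => (hint1 x).aestronglyMeasurable)
      (hint1 x₀) (hint2 x₀).aestronglyMeasurable ?_ (integrable_const _)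
      (Filter.Eventually.of_forall fun z x _ => hptderiv2 z x)).2
    filter_upwards [hM] with z hz x hx
    rw [Real.norm_eq_abs, abs_mul, abs_pow]
    exact mul_le_mul (pow_le_pow_left₀ (abs_nonneg _) hz 2)
      (hexpbound x₀ x hx z hz) (abs_nonneg _) (pow_nonneg hM0 2)
  have hg2le : ∀ x : ℝ, g2 x ≤ M ^ 2 * g x := by
    intro x
    have hmono : (∫ z, h z ^ 2 * Real.exp (-x * h z) ∂ν)
        ≤ ∫ z, M ^ 2 * Real.exp (-x * h z) ∂ν := by
      apply integral_mono_ae (hint2 x) ((hint0 x).const_mul _)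
      filter_upwards [hM] with z hz
      have h2 : h z ^ 2 ≤ M ^ 2 := by
        rw [← sq_abs]
        exact pow_le_pow_left₀ (abs_nonneg _) hz 2
      exact mul_le_mul_of_nonneg_right h2 (Real.exp_pos _).le
    simpa [hg2_def, hg_def, integral_const_mul] using hmono
  have hg0 : g 0 = 1 := by simp [hg_def]
  have hg10 : g1 0 = -∫ z, h z ∂ν := by
    simp only [hg1_def, neg_zero, zero_mul, neg_mul, Real.exp_zero, mul_one]
    exact integral_neg _
  set ψ : ℝ → ℝ := fun x => g1 x / g x - x * M ^ 2 with hψ_def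
  have hψd : ∀ x : ℝ, HasDerivAt ψ
      ((g2 x * g x - g1 x * g1 x) / g x ^ 2 - 1 * M ^ 2) x := by
    intro x
    exact ((hg1 x).div (hg x) (hgpos x).ne').sub ((hasDerivAt_id x).mul_const _)
  have hψanti : Antitone ψ := by
    apply antitone_of_hasDerivAt_nonpos hψd
    rw [Pi.le_def]
    intro x
    simp only [Pi.zero_apply]
    have h1 : g2 x * g x - g1 x * g1 x ≤ M ^ 2 * g x ^ 2 := by
      have := mul_le_mul_of_nonneg_right (hg2le x) (hgpos x).le
      nlinarith [sq_nonneg (g1 x), sq_nonneg (g x)]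
    have h2 : (g2 x * g x - g1 x * g1 x) / g x ^ 2 ≤ M ^ 2 := by
      rw [div_le_iff₀ (pow_pos (hgpos x) 2)]
      linarith [h1]
    simp only [one_mul]
    linarith
  have hψle : ∀ x : ℝ, 0 ≤ x → g1 x / g x ≤ -(∫ z, h z ∂ν) + x * M ^ 2 := by
    intro x hx
    have := hψanti hx
    rw [hψ_def] at this
    simp only [hg0, hg10, zero_mul, sub_zero, div_one] at this
    linarith
  set F : ℝ → ℝ := fun x => Real.log (g x) + x * (∫ z, h z ∂ν) - x ^ 2 * M ^ 2 / 2
    with hF_def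
  have hFd : ∀ x : ℝ, HasDerivAt F
      (g1 x / g x + (1 * (∫ z, h z ∂ν)) - (↑2 * x ^ 1 * (M ^ 2) / 2)) x := by
    intro x
    have h1 : HasDerivAt (fun x => Real.log (g x)) (g1 x / g x) x :=
      (hg x).log (hgpos x).ne'
    have h2 : HasDerivAt (fun x : ℝ => x * (∫ z, h z ∂ν)) (1 * ∫ z, h z ∂ν) x :=
      (hasDerivAt_id x).mul_const _
    have h3 : HasDerivAt (fun x : ℝ => x ^ 2 * M ^ 2 / 2)
        ((↑2 * x ^ 1) * M ^ 2 / 2) x :=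
      (((hasDerivAt_pow 2 x)).mul_const (M ^ 2)).div_const 2
    exact (h1.add h2).sub h3
  have hFanti : AntitoneOn F (Set.Ici (0:ℝ)) := by
    apply antitoneOn_of_hasDerivWithinAt_nonpos (convex_Ici 0)
      (fun x _ => (hFd x).continuousAt.continuousWithinAt)
      (fun x hx => (hFd x).hasDerivWithinAt)
    intro x hx
    rw [interior_Ici] at hx
    have hx0 : (0:ℝ) ≤ x := le_of_lt hx
    have h4 := hψle x hx0
    have h5 : (↑2 * x ^ 1 * (M ^ 2) / 2 : ℝ) = x * M ^ 2 := by push_cast; ring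
    rw [h5, one_mul]
    linarith
  have hF0 : F 0 = 0 := by simp [hF_def, hg0]
  have hFs := hFanti (Set.self_mem_Ici) (Set.mem_Ici.2 hs) hs
  rw [hF0, hF_def] at hFs
  have hFs' : Real.log (g s) + s * (∫ z, h z ∂ν) - s ^ 2 * M ^ 2 / 2 ≤ 0 := hFs
  linarith

lemma integral_withDensity_ofReal' {α : Type*} [MeasurableSpace α]
    {μ0 : Measure α} {ρ : α → ℝ} (hρm : Measurable ρ)
    (hρ0 : ∀ᵐ z ∂μ0, 0 ≤ ρ z) (f : α → ℝ) :
    ∫ z, f z ∂(μ0.withDensity fun z => ENNReal.ofReal (ρ z)) = ∫ z, ρ z * f z ∂μ0 := by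
  have heq : (fun z => ENNReal.ofReal (ρ z))
      = fun z => (((ρ z).toNNReal : ℝ≥0) : ℝ≥0∞) := rfl
  rw [heq, integral_withDensity_eq_integral_smul (hρm.real_toNNReal) f]
  apply integral_congr_ae
  filter_upwards [hρ0] with z hz
  simp [NNReal.smul_def, Real.coe_toNNReal _ hz]

lemma density_integrable' {α : Type*} [MeasurableSpace α]
    {μ0 : Measure α} {ρ : α → ℝ} (hρm : Measurable ρ)
    (hρ0 : ∀ᵐ z ∂μ0, 0 ≤ ρ z)
    (hprob : IsProbabilityMeasure (μ0.withDensity fun z => ENNReal.ofReal (ρ z))) :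
    Integrable ρ μ0 := by
  have h1 : ∫⁻ z, ENNReal.ofReal (ρ z) ∂μ0 = 1 := by
    have := hprob.measure_univ
    rwa [withDensity_apply _ MeasurableSet.univ, setLIntegral_univ] at this
  refine ⟨hρm.aestronglyMeasurable, ?_⟩
  rw [hasFiniteIntegral_iff_norm]
  have h2 : ∫⁻ z, ENNReal.ofReal ‖ρ z‖ ∂μ0 = ∫⁻ z, ENNReal.ofReal (ρ z) ∂μ0 := by
    apply lintegral_congr_ae
    filter_upwards [hρ0] with z hz
    rw [Real.norm_eq_abs, abs_of_nonneg hz]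
  rw [h2, h1]
  exact ENNReal.one_lt_top

lemma density_integral_one' {α : Type*} [MeasurableSpace α]
    {μ0 : Measure α} {ρ : α → ℝ} (hρm : Measurable ρ)
    (hρ0 : ∀ᵐ z ∂μ0, 0 ≤ ρ z)
    (hprob : IsProbabilityMeasure (μ0.withDensity fun z => ENNReal.ofReal (ρ z))) :
    ∫ z, ρ z ∂μ0 = 1 := by
  have h1 := integral_withDensity_ofReal' hρm hρ0 (fun _ => (1:ℝ))
  simp only [mul_one] at h1
  rw [← h1]
  simp

lemma ae_abs_le_of_supNorm_le' {α : Type*} [MeasurableSpace α]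
    {μ0 : Measure α} {h : α → ℝ} {M C : ℝ} (hM0 : 0 ≤ M)
    (hC : ∀ᵐ z ∂μ0, |h z| ≤ C)
    (hsup : (essSup (fun z => ENNReal.ofReal |h z|) μ0).toReal ≤ M) :
    ∀ᵐ z ∂μ0, |h z| ≤ M := by
  have hne : essSup (fun z => ENNReal.ofReal |h z|) μ0 ≠ ⊤ := by
    have hle : essSup (fun z => ENNReal.ofReal |h z|) μ0 ≤ ENNReal.ofReal C := by
      refine essSup_le_of_ae_le _ ?_
      filter_upwards [hC] with z hz
      exact ENNReal.ofReal_le_ofReal hz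
    exact ne_top_of_le_ne_top ENNReal.ofReal_ne_top hle
  have hle : essSup (fun z => ENNReal.ofReal |h z|) μ0 ≤ ENNReal.ofReal M :=
    (ENNReal.le_ofReal_iff_toReal_le hne hM0).2 hsup
  filter_upwards [ENNReal.ae_le_essSup (fun z => ENNReal.ofReal |h z|)] with z hz
  have h3 := le_trans hz hle
  rwa [ENNReal.ofReal_le_ofReal_iff hM0] at h3

lemma kl_nonneg' {α : Type*} [MeasurableSpace α] {μ0 : Measure α} {ρ σ : α → ℝ}
    (hρpos : ∀ᵐ z ∂μ0, 0 < ρ z) (hσpos : ∀ᵐ z ∂μ0, 0 < σ z)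
    (hρ1 : ∫ z, ρ z ∂μ0 = 1) (hσ1 : ∫ z, σ z ∂μ0 = 1)
    (hρint : Integrable ρ μ0) (hσint : Integrable σ μ0)
    (hint : Integrable (fun z => ρ z * Real.log (ρ z / σ z)) μ0) :
    0 ≤ ∫ z, ρ z * Real.log (ρ z / σ z) ∂μ0 := by
  have hmono : (fun z => ρ z - σ z) ≤ᵐ[μ0] fun z => ρ z * Real.log (ρ z / σ z) := by
    filter_upwards [hρpos, hσpos] with z hρz hσz
    have h1 : Real.log (σ z / ρ z) ≤ σ z / ρ z - 1 :=
      Real.log_le_sub_one_of_pos (by positivity)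
    have h2 : Real.log (ρ z / σ z) = -Real.log (σ z / ρ z) := by
      rw [← Real.log_inv]
      congr 1
      field_simp
    rw [h2]
    have h3 : ρ z * (σ z / ρ z - 1) = σ z - ρ z := by field_simp
    nlinarith [mul_le_mul_of_nonneg_left h1 hρz.le]
  have hsub : ∫ z, (ρ z - σ z) ∂μ0 = 0 := by
    rw [integral_sub hρint hσint, hρ1, hσ1, sub_self]
  have hmain := integral_mono_ae (f := fun z => ρ z - σ z)
    (g := fun z => ρ z * Real.log (ρ z / σ z)) (hρint.sub hσint) hint hmono
  rw [hsub] at hmain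
  exact hmain


/-- regret bound for infinite-dimensional entropic mirror descent. -/
theorem md_regret_bound
    (d T : ℕ) (Z : Set (Fin d → ℝ)) (hZ : MeasurableSet Z)
    (hZ0 : volume Z ≠ 0) (hZfin : volume Z ≠ ⊤)
    (η M : ℝ) (hη : 0 < η) (hM0 : 0 ≤ M)
    (h : ℕ → (Fin d → ℝ) → ℝ)
    (hhm : ∀ t, Measurable (h t))
    (hbdd : ∀ t, ∃ C, ∀ z ∈ Z, |h t z| ≤ C)
    (hM : ∀ t, supNormOn Z (h t) ≤ M)
    (μs : ℕ → Measure (Fin d → ℝ)) (ρs : ℕ → (Fin d → ℝ) → ℝ)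
    (hμs : ∀ t, IsDensityMeasure Z (μs t) (ρs t))
    (hrec : ∀ t, t < T → μs (t + 1) = MDmeas Z η (ρs t) (h t))
    (μ : Measure (Fin d → ℝ)) (ρ : (Fin d → ℝ) → ℝ)
    (hμ : IsDensityMeasure Z μ ρ)
    (hKL : IntegrableOn (fun z => ρ z * Real.log (ρ z / ρs 0 z)) Z) :
    ∑ t ∈ Finset.range T, ((∫ z, h t z ∂(μs t)) - ∫ z, h t z ∂μ)
      ≤ (∫ z in Z, ρ z * Real.log (ρ z / ρs 0 z)) / η + η * M ^ 2 * T / 2 := by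
  obtain ⟨hμprob, hρm, hρpos, hμeq⟩ := hμ
  have hρ0 : ∀ᵐ z ∂(volume.restrict Z), 0 ≤ ρ z := hρpos.mono fun z hz => hz.le
  have hμprob' : IsProbabilityMeasure
      ((volume.restrict Z).withDensity fun z => ENNReal.ofReal (ρ z)) := hμeq ▸ hμprob
  have hρint : Integrable ρ (volume.restrict Z) := density_integrable' hρm hρ0 hμprob'
  have hρ1 : ∫ z in Z, ρ z = 1 := density_integral_one' hρm hρ0 hμprob'
  have hprob : ∀ t, IsProbabilityMeasure (μs t) := fun t => (hμs t).1
  have hρsm : ∀ t, Measurable (ρs t) := fun t => (hμs t).2.1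
  have hρspos : ∀ t, ∀ᵐ z ∂(volume.restrict Z), 0 < ρs t z := fun t => (hμs t).2.2.1
  have hρs0 : ∀ t, ∀ᵐ z ∂(volume.restrict Z), 0 ≤ ρs t z :=
    fun t => (hρspos t).mono fun z hz => hz.le
  have hdens : ∀ t, μs t
      = (volume.restrict Z).withDensity (fun z => ENNReal.ofReal (ρs t z)) :=
    fun t => (hμs t).2.2.2
  have hprob' : ∀ t, IsProbabilityMeasure
      ((volume.restrict Z).withDensity fun z => ENNReal.ofReal (ρs t z)) :=
    fun t => (hdens t) ▸ (hprob t)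
  have hρsint : ∀ t, Integrable (ρs t) (volume.restrict Z) :=
    fun t => density_integrable' (hρsm t) (hρs0 t) (hprob' t)
  have hρs1 : ∀ t, ∫ z in Z, ρs t z = 1 :=
    fun t => density_integral_one' (hρsm t) (hρs0 t) (hprob' t)
  have hhb : ∀ t, ∀ᵐ z ∂(volume.restrict Z), |h t z| ≤ M := by
    intro t
    obtain ⟨C, hC⟩ := hbdd t
    refine ae_abs_le_of_supNorm_le' (C := C) hM0 ?_ (hM t)
    filter_upwards [ae_restrict_mem hZ] with z hz using hC z hz
  have hhbμ : ∀ t, ∀ᵐ z ∂(μs t), |h t z| ≤ M := by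
    intro t
    rw [hdens t]
    exact Filter.Eventually.filter_mono
      (withDensity_absolutelyContinuous (volume.restrict Z) _).ae_le (hhb t)
  have hIs : ∀ (t : ℕ) (f : (Fin d → ℝ) → ℝ),
      ∫ z, f z ∂(μs t) = ∫ z in Z, ρs t z * f z := by
    intro t f
    rw [hdens t]
    exact integral_withDensity_ofReal' (hρsm t) (hρs0 t) f
  have hIμ : ∀ f : (Fin d → ℝ) → ℝ, ∫ z, f z ∂μ = ∫ z in Z, ρ z * f z := by
    intro f
    rw [hμeq]
    exact integral_withDensity_ofReal' hρm hρ0 f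
  set c : ℕ → ℝ := fun t => ∫ y in Z, ρs t y * Real.exp (-η * h t y) with hc_def
  have hc_eq : ∀ t, c t = ∫ z, Real.exp (-η * h t z) ∂(μs t) :=
    fun t => (hIs t _).symm
  have hexpint : ∀ t, Integrable (fun z => Real.exp (-η * h t z)) (μs t) := by
    intro t
    haveI := hprob t
    simpa using aux_integrable (μs t) (hhm t) hM0 (hhbμ t) 0 (-η)
  have hcpos : ∀ t, 0 < c t := by
    intro t
    rw [hc_eq t]
    haveI := hprob t
    have hmono : (fun _ => Real.exp (-(η * M))) ≤ᵐ[μs t]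
        fun z => Real.exp (-η * h t z) := by
      filter_upwards [hhbμ t] with z hz
      apply Real.exp_le_exp.2
      rw [neg_le, neg_mul, neg_neg]
      calc η * h t z ≤ |η * h t z| := le_abs_self _
        _ = |η| * |h t z| := abs_mul _ _
        _ = η * |h t z| := by rw [abs_of_pos hη]
        _ ≤ η * M := mul_le_mul_of_nonneg_left hz hη.le
    have hle := integral_mono_ae (integrable_const _) (hexpint t) hmono
    calc (0:ℝ) < Real.exp (-(η * M)) := Real.exp_pos _
      _ = ∫ _, Real.exp (-(η * M)) ∂(μs t) := by simp
      _ ≤ _ := hle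
  have hlog : ∀ t, Real.log (c t)
      ≤ -η * (∫ z, h t z ∂(μs t)) + η ^ 2 * M ^ 2 / 2 := by
    intro t
    rw [hc_eq t]
    haveI := hprob t
    exact cgf_bound (μs t) (hhm t) hM0 (hhbμ t) hη.le
  have hdeq : ∀ t, t < T → (∀ᵐ z ∂(volume.restrict Z),
      ρs (t+1) z = ρs t z * Real.exp (-η * h t z) / c t) := by
    intro t ht
    have h1 : (volume.restrict Z).withDensity
          (fun z => ENNReal.ofReal (ρs (t+1) z))
        = (volume.restrict Z).withDensity
          (fun z => ENNReal.ofReal (ρs t z * Real.exp (-η * h t z) / c t)) := by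
      rw [← hdens (t+1), hrec t ht]
      rfl
    have hmeas2 : Measurable (fun z => ρs t z * Real.exp (-η * h t z) / c t) :=
      ((hρsm t).mul (((hhm t).const_mul (-η)).exp)).div_const _
    have h2 := (withDensity_eq_iff_of_sigmaFinite
      (ENNReal.measurable_ofReal.comp (hρsm (t+1))).aemeasurable
      (ENNReal.measurable_ofReal.comp hmeas2).aemeasurable).1 h1
    filter_upwards [h2, hρspos t, hρspos (t+1)] with z hz h1z h2z
    have hrhs : 0 ≤ ρs t z * Real.exp (-η * h t z) / c t :=
      (div_pos (mul_pos h1z (Real.exp_pos _)) (hcpos t)).le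
    exact (ENNReal.ofReal_eq_ofReal_iff h2z.le hrhs).1 hz
  have hstep : ∀ t, t < T →
      IntegrableOn (fun z => ρ z * Real.log (ρ z / ρs t z)) Z →
      (IntegrableOn (fun z => ρ z * Real.log (ρ z / ρs (t+1) z)) Z ∧
        (∫ z in Z, ρ z * Real.log (ρ z / ρs (t+1) z))
          = (∫ z in Z, ρ z * Real.log (ρ z / ρs t z))
            + η * (∫ z, h t z ∂μ) + Real.log (c t)) := by
    intro t ht It
    have hae : (fun z => ρ z * Real.log (ρ z / ρs (t+1) z)) =ᵐ[volume.restrict Z]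
        (fun z => ρ z * Real.log (ρ z / ρs t z) + ρ z * (η * h t z)
            + ρ z * Real.log (c t)) := by
      filter_upwards [hdeq t ht, hρpos, hρspos t] with z he hρz hρtz
      rw [he]
      have hexpne : Real.exp (-η * h t z) ≠ 0 := (Real.exp_pos _).ne'
      have hnum : ρs t z * Real.exp (-η * h t z) ≠ 0 :=
        (mul_pos hρtz (Real.exp_pos _)).ne'
      have hlogeq : Real.log (ρ z / (ρs t z * Real.exp (-η * h t z) / c t))
          = Real.log (ρ z / ρs t z) + η * h t z + Real.log (c t) := by
        rw [Real.log_div hρz.ne'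
            (div_pos (mul_pos hρtz (Real.exp_pos _)) (hcpos t)).ne',
          Real.log_div hnum (hcpos t).ne',
          Real.log_mul hρtz.ne' hexpne, Real.log_exp,
          Real.log_div hρz.ne' hρtz.ne']
        ring
      rw [hlogeq]
      ring
    have Ih : Integrable (fun z => ρ z * (η * h t z)) (volume.restrict Z) := by
      refine Integrable.mono' (hρint.const_mul (|η| * M))
        (hρm.mul ((hhm t).const_mul η)).aestronglyMeasurable ?_
      filter_upwards [hρ0, hhb t] with z hz0 hzb
      rw [Real.norm_eq_abs, abs_mul, abs_mul, abs_of_nonneg hz0]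
      calc ρ z * (|η| * |h t z|) ≤ ρ z * (|η| * M) := by
            apply mul_le_mul_of_nonneg_left _ hz0
            exact mul_le_mul_of_nonneg_left hzb (abs_nonneg η)
        _ = |η| * M * ρ z := by ring
    have Ic : Integrable (fun z => ρ z * Real.log (c t)) (volume.restrict Z) :=
      hρint.mul_const _
    refine ⟨((It.add Ih).add Ic).congr hae.symm, ?_⟩
    rw [integral_congr_ae hae,
      integral_add (μ := volume.restrict Z)
        (f := fun z => ρ z * Real.log (ρ z / ρs t z) + ρ z * (η * h t z))
        (g := fun z => ρ z * Real.log (c t)) (It.add Ih) Ic,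
      integral_add It Ih]
    congr 1
    · congr 1
      have hmul : (fun z => ρ z * (η * h t z)) = fun z => η * (ρ z * h t z) := by
        funext z; ring
      rw [hIμ (h t), hmul, integral_const_mul]
    · rw [integral_mul_const, hρ1, one_mul]
  have main : ∀ n, n ≤ T →
      IntegrableOn (fun z => ρ z * Real.log (ρ z / ρs n z)) Z ∧
      η * (∑ t ∈ Finset.range n, ((∫ z, h t z ∂(μs t)) - ∫ z, h t z ∂μ))
        ≤ (∫ z in Z, ρ z * Real.log (ρ z / ρs 0 z))
           - (∫ z in Z, ρ z * Real.log (ρ z / ρs n z)) + n * (η ^ 2 * M ^ 2 / 2) := by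
    intro n
    induction n with
    | zero =>
      intro _
      refine ⟨hKL, ?_⟩
      simp
    | succ n ihn =>
      intro hn
      have hnT : n < T := lt_of_lt_of_le (Nat.lt_succ_self n) hn
      obtain ⟨In, hsum⟩ := ihn (le_of_lt hnT)
      obtain ⟨In1, heq⟩ := hstep n hnT In
      refine ⟨In1, ?_⟩
      rw [Finset.sum_range_succ, mul_add]
      have hper : η * ((∫ z, h n z ∂(μs n)) - ∫ z, h n z ∂μ)
          ≤ (∫ z in Z, ρ z * Real.log (ρ z / ρs n z))
            - (∫ z in Z, ρ z * Real.log (ρ z / ρs (n+1) z)) + η ^ 2 * M ^ 2 / 2 := by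
        rw [heq]
        have hl := hlog n
        have hexpand : η * ((∫ z, h n z ∂(μs n)) - ∫ z, h n z ∂μ)
            = η * (∫ z, h n z ∂(μs n)) - η * (∫ z, h n z ∂μ) := by ring
        rw [hexpand]
        have hl' : η * (∫ z, h n z ∂(μs n)) ≤ -Real.log (c n) + η ^ 2 * M ^ 2 / 2 := by
          have := hlog n
          linarith [this]
        linarith
      push_cast
      linarith [hper, hsum]
  obtain ⟨IT, hsumT⟩ := main T le_rfl
  have hKT : 0 ≤ ∫ z in Z, ρ z * Real.log (ρ z / ρs T z) :=
    kl_nonneg' hρpos (hρspos T) hρ1 (hρs1 T) hρint (hρsint T) IT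
  refine le_of_mul_le_mul_left ?_ hη
  calc η * ∑ t ∈ Finset.range T, ((∫ z, h t z ∂(μs t)) - ∫ z, h t z ∂μ)
      ≤ (∫ z in Z, ρ z * Real.log (ρ z / ρs 0 z))
          - (∫ z in Z, ρ z * Real.log (ρ z / ρs T z)) + T * (η ^ 2 * M ^ 2 / 2) :=
        hsumT
    _ ≤ (∫ z in Z, ρ z * Real.log (ρ z / ρs 0 z)) + T * (η ^ 2 * M ^ 2 / 2) := by
        linarith
    _ = η * ((∫ z in Z, ρ z * Real.log (ρ z / ρs 0 z)) / η + η * M ^ 2 * T / 2) := by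
        field_simp


end

end Paper
end

section
/- Convergence of infinite-dimensional entropic mirror descent to a mixed Nash equilibrium: Suppose M > 0 satisfies ‖g − Gν‖∞ ≤ M for all ν ∈ M(Θ) and ‖G†μ‖∞ ≤ M for all μ ∈ M(W). Let (μ_NE, ν_NE) be a mixed Nash equilibrium of F, let μ₁ ∈ M(W), ν₁ ∈ M(Θ) be such that D₀ = KL(μ_NE‖μ₁) + KL(ν_NE‖ν₁) is finite and positive, and run the mirror-descent iterates μ_{t+1} = MD_η(μ_t, −g + Gν_t), ν_{t+1} = MD_η(ν_t, −G†μ_t) for t = 1, …, T with step-size η = √(D₀/T)/M. Then the averaged measures μ̄_T = (1/T) Σ_{t=1}^T μ_t and ν̄_T = (1/T) Σ_{t=1}^T ν_t satisfy F(μ_NE, ν̄_T) − F(μ̄_T, ν_NE) ≤ 2 M √(D₀/T); in particular |F(μ_NE, ν̄_T) − F(μ_NE, ν_NE)| ≤ 2 M √(D₀/T) and |F(μ̄_T, ν_NE) − F(μ_NE, ν_NE)| ≤ 2 M √(D₀/T). -/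
open MeasureTheory Real ENNReal

namespace Paper

noncomputable section

-- ===== auxiliary lemmas =====

section Aux

open Filter

lemma bern_upos (p : ℝ) (hp0 : 0 ≤ p) (hp1 : p ≤ 1) (a : ℝ) :
    0 < (1 - p) * Real.exp (-a) + p * Real.exp a := by
  rcases le_or_gt p (1/2) with h | h
  · have : (1:ℝ)/2 * Real.exp (-a) ≤ (1 - p) * Real.exp (-a) :=
      mul_le_mul_of_nonneg_right (by linarith) (Real.exp_pos _).le
    nlinarith [Real.exp_pos (-a), mul_nonneg hp0 (Real.exp_pos a).le]
  · have : (1:ℝ)/2 * Real.exp a ≤ p * Real.exp a :=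
      mul_le_mul_of_nonneg_right (by linarith) (Real.exp_pos _).le
    nlinarith [Real.exp_pos a, mul_nonneg (by linarith : (0:ℝ) ≤ 1 - p) (Real.exp_pos (-a)).le]

lemma bern_hoeffding (p : ℝ) (hp0 : 0 ≤ p) (hp1 : p ≤ 1) (a : ℝ) :
    (1 - p) * Real.exp (-a) + p * Real.exp a ≤ Real.exp ((2*p - 1) * a + a^2 / 2) := by
  set u : ℝ → ℝ := fun x => (1 - p) * Real.exp (-x) + p * Real.exp x with hu_def
  set v : ℝ → ℝ := fun x => (p - 1) * Real.exp (-x) + p * Real.exp x with hv_def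
  have upos : ∀ x, 0 < u x := fun x => bern_upos p hp0 hp1 x
  have hexp : ∀ x : ℝ, HasDerivAt (fun y : ℝ => Real.exp (-y)) (-Real.exp (-x)) x := by
    intro x
    simpa [Function.comp_def] using (Real.hasDerivAt_exp (-x)).comp x (hasDerivAt_neg x)
  have hu : ∀ x, HasDerivAt u (v x) x := by
    intro x
    have := ((hexp x).const_mul (1 - p)).add ((Real.hasDerivAt_exp x).const_mul p)
    have e : v x = (1 - p) * -Real.exp (-x) + p * Real.exp x := by simp only [hv_def]; ring
    rw [e]; exact this
  have hv : ∀ x, HasDerivAt v (u x) x := by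
    intro x
    have := ((hexp x).const_mul (p - 1)).add ((Real.hasDerivAt_exp x).const_mul p)
    have e : u x = (p - 1) * -Real.exp (-x) + p * Real.exp x := by simp only [hu_def]; ring
    rw [e]; exact this
  set φ : ℝ → ℝ := fun x => (2*p - 1) * x + x^2 / 2 - Real.log (u x) with hφ_def
  set ψ : ℝ → ℝ := fun x => (2*p - 1) + x - v x / u x with hψ_def
  have hφ' : ∀ x, HasDerivAt φ (ψ x) x := by
    intro x
    have hlog : HasDerivAt (fun y => Real.log (u y)) (v x / u x) x :=
      (hu x).log (upos x).ne'
    have hlin : HasDerivAt (fun y : ℝ => (2*p - 1) * y + y^2 / 2)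
        ((2*p - 1) + x) x := by
      have h1 : HasDerivAt (fun y : ℝ => (2*p - 1) * y) (2*p - 1) x := by
        simpa using (hasDerivAt_id x).const_mul (2*p - 1)
      have h2 : HasDerivAt (fun y : ℝ => y^2 / 2) x x := by
        have := (hasDerivAt_pow 2 x).div_const 2
        simpa using this
      exact h1.add h2
    exact hlin.sub hlog
  have hψ' : ∀ x, HasDerivAt ψ ((v x / u x)^2) x := by
    intro x
    have hdiv : HasDerivAt (fun y => v y / u y)
        ((u x * u x - v x * v x) / (u x)^2) x :=
      (hv x).div (hu x) (upos x).ne'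
    have hlin : HasDerivAt (fun y : ℝ => (2*p - 1) + y) 1 x := by
      simpa using (hasDerivAt_id x).const_add (2*p - 1)
    have := hlin.sub hdiv
    have h0 : (u x)^2 ≠ 0 := pow_ne_zero _ (upos x).ne'
    have e : (v x / u x)^2 = 1 - (u x * u x - v x * v x) / u x ^ 2 := by
      rw [div_pow, one_sub_div h0]; ring
    rw [e]; exact this
  have hψ0 : ψ 0 = 0 := by
    simp [hψ_def, hu_def, hv_def]
    ring
  have hψmono : Monotone ψ := by
    apply monotone_of_deriv_nonneg
    · exact fun x => (hψ' x).differentiableAt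
    · intro x
      rw [(hψ' x).deriv]
      positivity
  have hφ0 : φ 0 = 0 := by simp [hφ_def, hu_def]
  have key : ∀ x, 0 ≤ φ x := by
    intro x
    rcases le_total 0 x with h | h
    · have : MonotoneOn φ (Set.Ici 0) := by
        apply monotoneOn_of_deriv_nonneg (convex_Ici 0)
        · exact Continuous.continuousOn (by
            fun_prop (disch := exact fun x => (upos x).ne'))
        · intro y _
          exact (hφ' y).differentiableAt.differentiableWithinAt
        · intro y hy
          rw [(hφ' y).deriv]
          rw [interior_Ici] at hy
          have := hψmono (le_of_lt hy)
          rwa [hψ0] at this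
      have := this Set.self_mem_Ici (Set.mem_Ici.2 h) h
      rwa [hφ0] at this
    · have : AntitoneOn φ (Set.Iic 0) := by
        apply antitoneOn_of_deriv_nonpos (convex_Iic 0)
        · exact Continuous.continuousOn (by
            fun_prop (disch := exact fun x => (upos x).ne'))
        · intro y _
          exact (hφ' y).differentiableAt.differentiableWithinAt
        · intro y hy
          rw [(hφ' y).deriv]
          rw [interior_Iic] at hy
          have := hψmono (le_of_lt hy)
          rwa [hψ0] at this
      have := this (Set.mem_Iic.2 h) Set.self_mem_Iic h
      rwa [hφ0] at this
  have := key a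
  have hlog : Real.log (u a) ≤ (2*p - 1) * a + a^2 / 2 := by
    simp only [hφ_def] at this; linarith
  exact (Real.log_le_iff_le_exp (upos a)).1 hlog

lemma int_bdd {β : Type*} [MeasurableSpace β] {μ : Measure β} [IsFiniteMeasure μ]
    {f : β → ℝ} (hf : AEStronglyMeasurable f μ) {C : ℝ} (hC : ∀ x, |f x| ≤ C) :
    Integrable f μ :=
  Integrable.mono' (integrable_const C) hf
    (Filter.Eventually.of_forall fun x => by rw [Real.norm_eq_abs]; exact hC x)

lemma mgf_bound {α : Type*} [MeasurableSpace α] (μ : Measure α) [IsProbabilityMeasure μ]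
    (h : α → ℝ) (hh : AEStronglyMeasurable h μ) (M l : ℝ) (hM : 0 < M)
    (hbd : ∀ᵐ x ∂μ, |h x| ≤ M) :
    ∫ x, Real.exp (l * h x) ∂μ ≤ Real.exp (l * (∫ x, h x ∂μ) + l^2 * M^2 / 2) := by
  have hint : Integrable h μ :=
    Integrable.mono' (integrable_const M) hh (hbd.mono fun x hx => by
      simpa [Real.norm_eq_abs] using hx)
  have hexpm : AEStronglyMeasurable (fun x => Real.exp (l * h x)) μ :=
    (Real.continuous_exp.comp_aestronglyMeasurable (hh.const_mul l))
  have hexpint : Integrable (fun x => Real.exp (l * h x)) μ := by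
    apply Integrable.mono' (integrable_const (Real.exp (|l| * M))) hexpm
    filter_upwards [hbd] with x hx
    rw [Real.norm_eq_abs, abs_of_pos (Real.exp_pos _)]
    apply Real.exp_le_exp.2
    calc l * h x ≤ |l * h x| := le_abs_self _
      _ = |l| * |h x| := abs_mul _ _
      _ ≤ |l| * M := mul_le_mul_of_nonneg_left hx (abs_nonneg l)
  have chord : ∀ᵐ x ∂μ, Real.exp (l * h x) ≤
      (M - h x)/(2*M) * Real.exp (-(l*M)) + (M + h x)/(2*M) * Real.exp (l*M) := by
    filter_upwards [hbd] with x hx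
    have hb1 : (0:ℝ) ≤ (M - h x)/(2*M) := by
      apply div_nonneg _ (by linarith)
      have := (abs_le.1 hx).2; linarith
    have hb2 : (0:ℝ) ≤ (M + h x)/(2*M) := by
      apply div_nonneg _ (by linarith)
      have := (abs_le.1 hx).1; linarith
    have hsum : (M - h x)/(2*M) + (M + h x)/(2*M) = 1 := by
      field_simp; ring
    have := convexOn_exp.2 (Set.mem_univ (-(l*M))) (Set.mem_univ (l*M)) hb1 hb2 hsum
    simp only [smul_eq_mul] at this
    have harg : (M - h x)/(2*M) * (-(l*M)) + (M + h x)/(2*M) * (l*M) = l * h x := by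
      field_simp; ring
    rwa [harg] at this
  have i1 : Integrable (fun x => (M - h x)/(2*M) * Real.exp (-(l*M))) μ :=
    ((((integrable_const M).sub hint).div_const _).mul_const _ :
      Integrable (fun x => (M - h x)/(2*M) * Real.exp (-(l*M))) μ)
  have i2 : Integrable (fun x => (M + h x)/(2*M) * Real.exp (l*M)) μ :=
    (((integrable_const M).add hint).div_const _).mul_const _
  have hrhsint : Integrable (fun x =>
      (M - h x)/(2*M) * Real.exp (-(l*M)) + (M + h x)/(2*M) * Real.exp (l*M)) μ :=
    i1.add i2
  have step1 : ∫ x, Real.exp (l * h x) ∂μ ≤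
      (M - ∫ x, h x ∂μ)/(2*M) * Real.exp (-(l*M))
        + (M + ∫ x, h x ∂μ)/(2*M) * Real.exp (l*M) := by
    have := integral_mono_ae hexpint hrhsint chord
    refine this.trans_eq ?_
    rw [integral_add i1 i2, integral_mul_const, integral_mul_const, integral_div,
      integral_div, integral_sub (integrable_const M) hint,
      integral_add (integrable_const M) hint, integral_const]
    simp
  set E := ∫ x, h x ∂μ with hE
  have hEbd : |E| ≤ M := by
    calc |E| ≤ ∫ x, |h x| ∂μ := by
          simpa [Real.norm_eq_abs] using norm_integral_le_integral_norm h (μ := μ)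
      _ ≤ ∫ _x, M ∂μ := integral_mono_ae hint.abs (integrable_const M) hbd
      _ = M := by simp
  set p := (M + E)/(2*M) with hp
  have hp0 : 0 ≤ p := by
    apply div_nonneg _ (by linarith)
    have := (abs_le.1 hEbd).1; linarith
  have hp1 : p ≤ 1 := by
    rw [hp, div_le_one (by linarith)]
    have := (abs_le.1 hEbd).2; linarith
  have h1p : 1 - p = (M - E)/(2*M) := by
    rw [hp]; field_simp; ring
  have := bern_hoeffding p hp0 hp1 (l*M)
  rw [h1p] at this
  have harg2 : (2*p - 1) * (l*M) + (l*M)^2/2 = l * E + l^2 * M^2 / 2 := by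
    rw [hp]; field_simp; ring
  rw [harg2] at this
  exact step1.trans this

variable {α : Type*} [MeasurableSpace α] {m : Measure α}

lemma integral_wd {ρ : α → ℝ} (hρ : Measurable ρ) (hρ0 : ∀ᵐ x ∂m, 0 ≤ ρ x) (f : α → ℝ) :
    ∫ x, f x ∂(m.withDensity fun x => ENNReal.ofReal (ρ x)) = ∫ x, ρ x * f x ∂m := by
  have he : (fun x => ENNReal.ofReal (ρ x))
      = fun x => ((fun y => (ρ y).toNNReal) x : ℝ≥0∞) := rfl
  rw [he, integral_withDensity_eq_integral_smul hρ.real_toNNReal]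
  apply integral_congr_ae
  filter_upwards [hρ0] with x hx
  simp [NNReal.smul_def, Real.coe_toNNReal _ hx]

lemma lintegral_ofReal_density (ρ : α → ℝ)
    (hprob : IsProbabilityMeasure (m.withDensity fun x => ENNReal.ofReal (ρ x))) :
    ∫⁻ x, ENNReal.ofReal (ρ x) ∂m = 1 := by
  have := hprob.measure_univ
  rwa [withDensity_apply _ MeasurableSet.univ, Measure.restrict_univ] at this

lemma integrable_density {ρ : α → ℝ} (hρ : Measurable ρ) (hρ0 : ∀ᵐ x ∂m, 0 ≤ ρ x)
    (hprob : IsProbabilityMeasure (m.withDensity fun x => ENNReal.ofReal (ρ x))) :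
    Integrable ρ m := by
  refine ⟨hρ.aestronglyMeasurable, ?_⟩
  rw [hasFiniteIntegral_iff_ofReal hρ0, lintegral_ofReal_density ρ hprob]
  exact ENNReal.one_lt_top

lemma integral_density_eq_one {ρ : α → ℝ} (hρ : Measurable ρ) (hρ0 : ∀ᵐ x ∂m, 0 ≤ ρ x)
    (hprob : IsProbabilityMeasure (m.withDensity fun x => ENNReal.ofReal (ρ x))) :
    ∫ x, ρ x ∂m = 1 := by
  rw [integral_eq_lintegral_of_nonneg_ae hρ0 hρ.aestronglyMeasurable,
    lintegral_ofReal_density ρ hprob]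
  simp

lemma kl_nonneg {ρ ρ' : α → ℝ} (hρ : Measurable ρ) (hρ' : Measurable ρ')
    (hρ0 : ∀ᵐ x ∂m, 0 < ρ x) (hρ'0 : ∀ᵐ x ∂m, 0 < ρ' x)
    (hρprob : IsProbabilityMeasure (m.withDensity fun x => ENNReal.ofReal (ρ x)))
    (hρ'prob : IsProbabilityMeasure (m.withDensity fun x => ENNReal.ofReal (ρ' x)))
    (hint : Integrable (fun x => ρ x * Real.log (ρ x / ρ' x)) m) :
    0 ≤ ∫ x, ρ x * Real.log (ρ x / ρ' x) ∂m := by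
  have hiρ := integrable_density hρ (hρ0.mono fun x h => h.le) hρprob
  have hiρ' := integrable_density hρ' (hρ'0.mono fun x h => h.le) hρ'prob
  have hpt : ∀ᵐ x ∂m, ρ x - ρ' x ≤ ρ x * Real.log (ρ x / ρ' x) := by
    filter_upwards [hρ0, hρ'0] with x h1 h2
    have hl : Real.log (ρ' x / ρ x) ≤ ρ' x / ρ x - 1 :=
      Real.log_le_sub_one_of_pos (div_pos h2 h1)
    have hmul := mul_le_mul_of_nonneg_left hl h1.le
    rw [Real.log_div h2.ne' h1.ne'] at hmul
    rw [Real.log_div h1.ne' h2.ne']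
    have : ρ x * (ρ' x / ρ x - 1) = ρ' x - ρ x := by field_simp
    nlinarith [hmul, this]
  have hsub : Integrable (fun x => ρ x - ρ' x) m := hiρ.sub hiρ'
  have := integral_mono_ae hsub hint hpt
  rw [integral_sub hiρ hiρ',
    integral_density_eq_one hρ (hρ0.mono fun x h => h.le) hρprob,
    integral_density_eq_one hρ' (hρ'0.mono fun x h => h.le) hρ'prob] at this
  linarith

lemma md_step (hm : m ≠ 0)
    (ρ ρ' τ : α → ℝ) (hρ : Measurable ρ) (hρ' : Measurable ρ') (hτ : Measurable τ)
    (hρ0 : ∀ᵐ x ∂m, 0 < ρ x) (hρ'0 : ∀ᵐ x ∂m, 0 < ρ' x) (hτ0 : ∀ᵐ x ∂m, 0 < τ x)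
    (hρprob : IsProbabilityMeasure (m.withDensity fun x => ENNReal.ofReal (ρ x)))
    (hρ'prob : IsProbabilityMeasure (m.withDensity fun x => ENNReal.ofReal (ρ' x)))
    (hτprob : IsProbabilityMeasure (m.withDensity fun x => ENNReal.ofReal (τ x)))
    (h : α → ℝ) (hhm : Measurable h) (B : ℝ) (hB : ∀ x, |h x| ≤ B)
    (M : ℝ) (hM : 0 < M) (hMae : ∀ᵐ x ∂m, |h x| ≤ M)
    (η : ℝ) (hη : 0 < η)
    (heq : m.withDensity (fun x => ENNReal.ofReal (ρ' x)) =
      m.withDensity (fun x => ENNReal.ofReal (ρ x * Real.exp (-η * h x) /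
        ∫ y, ρ y * Real.exp (-η * h y) ∂m)))
    (hKL : Integrable (fun x => τ x * Real.log (τ x / ρ x)) m) :
    Integrable (fun x => τ x * Real.log (τ x / ρ' x)) m ∧
    η * ((∫ x, ρ x * h x ∂m) - ∫ x, τ x * h x ∂m) ≤
      (∫ x, τ x * Real.log (τ x / ρ x) ∂m) - (∫ x, τ x * Real.log (τ x / ρ' x) ∂m)
        + η^2 * M^2 / 2 := by
  have hρ0' := hρ0.mono fun x h => h.le
  have hτ0' := hτ0.mono fun x h => h.le
  have hiρ := integrable_density hρ hρ0' hρprob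
  have hiτ := integrable_density hτ hτ0' hτprob
  set c : ℝ := ∫ y, ρ y * Real.exp (-η * h y) ∂m with hc_def
  have hexp_meas : Measurable fun x => Real.exp (-η * h x) :=
    (Real.measurable_exp.comp (hhm.const_mul (-η)))
  have hic : Integrable (fun x => ρ x * Real.exp (-η * h x)) m := by
    have := hiρ.bdd_mul (c := Real.exp (η * B)) hexp_meas.aestronglyMeasurable ?_
    · exact this.congr (Filter.Eventually.of_forall fun x => mul_comm _ _)
    · apply Filter.Eventually.of_forall
      intro x
      rw [Real.norm_eq_abs, abs_of_pos (Real.exp_pos _)]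
      apply Real.exp_le_exp.2
      calc -η * h x ≤ |(-η) * h x| := le_abs_self _
        _ = η * |h x| := by rw [abs_mul, abs_neg, abs_of_pos hη]
        _ ≤ η * B := mul_le_mul_of_nonneg_left (hB x) hη.le
  have hcnn : ∀ᵐ x ∂m, 0 < ρ x * Real.exp (-η * h x) := by
    filter_upwards [hρ0] with x hx
    exact mul_pos hx (Real.exp_pos _)
  have hc0 : 0 < c := by
    rcases (integral_nonneg_of_ae (hcnn.mono fun x h => h.le)).lt_or_eq with h' | h'
    · exact h'
    · exfalso
      have h0 := (integral_eq_zero_iff_of_nonneg_ae (hcnn.mono fun x h => h.le) hic).1 h'.symm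
      have hFalse : ∀ᵐ x ∂m, False := by
        filter_upwards [h0, hcnn] with x h1 h2
        rw [Pi.zero_apply] at h1
        exact absurd h1 h2.ne'
      rw [Filter.eventually_false_iff_eq_bot, ae_eq_bot] at hFalse
      exact hm hFalse
  have hlint : ∫⁻ x, ENNReal.ofReal (ρ' x) ∂m ≠ ⊤ := by
    rw [lintegral_ofReal_density ρ' hρ'prob]; exact ENNReal.one_ne_top
  have hdens : ∀ᵐ x ∂m, ρ' x = ρ x * Real.exp (-η * h x) / c := by
    have hae := (withDensity_eq_iff (hρ'.ennreal_ofReal.aemeasurable)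
      ((hρ.mul hexp_meas).div_const c).ennreal_ofReal.aemeasurable hlint).1 heq
    filter_upwards [hae, hρ0, hρ'0] with x h1 h2 h3
    have hr : 0 < ρ x * Real.exp (-η * h x) / c :=
      div_pos (mul_pos h2 (Real.exp_pos _)) hc0
    exact (ENNReal.ofReal_eq_ofReal_iff h3.le hr.le).1 h1
  have hlogid : ∀ᵐ x ∂m, τ x * Real.log (τ x / ρ' x)
      = τ x * Real.log (τ x / ρ x) + τ x * (η * h x + Real.log c) := by
    filter_upwards [hdens, hρ0, hρ'0, hτ0] with x h1 h2 h3 h4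
    rw [h1]
    have he : Real.exp (-η * h x) ≠ 0 := (Real.exp_pos _).ne'
    rw [Real.log_div h4.ne' (by positivity), Real.log_div h4.ne' h2.ne',
      Real.log_div (by positivity) hc0.ne', Real.log_mul h2.ne' he, Real.log_exp]
    ring
  have hbdd : Integrable (fun x => τ x * (η * h x + Real.log c)) m := by
    have := hiτ.bdd_mul (c := η * B + |Real.log c|)
      (((hhm.const_mul η).add_const (Real.log c)).aestronglyMeasurable) ?_
    · exact this.congr (Filter.Eventually.of_forall fun x => mul_comm _ _)
    · apply Filter.Eventually.of_forall
      intro x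
      rw [Real.norm_eq_abs]
      calc |η * h x + Real.log c| ≤ |η * h x| + |Real.log c| := abs_add_le _ _
        _ ≤ η * B + |Real.log c| := by
            have h1 : |η * h x| = η * |h x| := by rw [abs_mul, abs_of_pos hη]
            rw [h1]
            have := mul_le_mul_of_nonneg_left (hB x) hη.le
            linarith
  have hlogid' : (fun x => τ x * Real.log (τ x / ρ x) + τ x * (η * h x + Real.log c))
      =ᵐ[m] (fun x => τ x * Real.log (τ x / ρ' x)) := hlogid.mono fun x hx => hx.symm
  have hKL' : Integrable (fun x => τ x * Real.log (τ x / ρ' x)) m :=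
    (hKL.add hbdd).congr hlogid'
  refine ⟨hKL', ?_⟩
  have iτh : Integrable (fun x => τ x * h x) m := by
    have hb : ∀ᵐ x ∂m, ‖h x‖ ≤ B := Filter.Eventually.of_forall fun x => by
      rw [Real.norm_eq_abs]; exact hB x
    exact (hiτ.bdd_mul hhm.aestronglyMeasurable hb).congr
      (Filter.Eventually.of_forall fun x => mul_comm _ _)
  have hintid : ∫ x, τ x * Real.log (τ x / ρ' x) ∂m
      = (∫ x, τ x * Real.log (τ x / ρ x) ∂m) + η * (∫ x, τ x * h x ∂m) + Real.log c := by
    rw [integral_congr_ae hlogid, integral_add hKL hbdd]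
    have he : ∀ x, τ x * (η * h x + Real.log c)
        = η * (τ x * h x) + Real.log c * τ x := fun x => by ring
    simp_rw [he]
    rw [integral_add (iτh.const_mul η) (hiτ.const_mul (Real.log c)),
      integral_const_mul, integral_const_mul,
      integral_density_eq_one hτ hτ0' hτprob]
    ring
  set μρ := m.withDensity fun x => ENNReal.ofReal (ρ x) with hμρ
  haveI : IsProbabilityMeasure μρ := hρprob
  have habs : μρ ≪ m := withDensity_absolutelyContinuous m _
  have hMμ : ∀ᵐ x ∂μρ, |h x| ≤ M := habs.ae_le hMae
  have hmgf := mgf_bound μρ h hhm.aestronglyMeasurable M (-η) hM hMμ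
  have hc_eq : c = ∫ x, Real.exp (-η * h x) ∂μρ := by
    rw [hμρ, integral_wd hρ hρ0']
  have hEh : ∫ x, h x ∂μρ = ∫ x, ρ x * h x ∂m := by
    rw [hμρ, integral_wd hρ hρ0']
  rw [← hc_eq, hEh] at hmgf
  have hlogc : Real.log c ≤ -η * (∫ x, ρ x * h x ∂m) + η^2 * M^2 / 2 := by
    have h2 := Real.log_le_log hc0 hmgf
    rwa [Real.log_exp, neg_sq] at h2
  rw [hintid]
  linarith [hlogc]

lemma wd_finsum {ι : Type*} (s : Finset ι) (f : ι → α → ℝ≥0∞)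
    (hf : ∀ i, Measurable (f i)) :
    m.withDensity (fun z => ∑ i ∈ s, f i z) = ∑ i ∈ s, m.withDensity (f i) := by
  classical
  induction s using Finset.induction_on with
  | empty => simp
  | insert a s hnotmem ih =>
      simp only [Finset.sum_insert hnotmem]
      have h2 : (fun z => f a z + ∑ i ∈ s, f i z)
          = (f a + fun z => ∑ i ∈ s, f i z) := rfl
      rw [h2, withDensity_add_left (hf a), ih]

end Aux

section Aux2

lemma Gop_meas {p q : ℕ} (K : (Fin p → ℝ) → (Fin q → ℝ) → ℝ)
    (hK : Measurable (Function.uncurry K)) (ν : Measure (Fin q → ℝ)) [SFinite ν] :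
    Measurable (Gop K ν) :=
  (hK.stronglyMeasurable.integral_prod_right').measurable

lemma Gadj_meas {p q : ℕ} (K : (Fin p → ℝ) → (Fin q → ℝ) → ℝ)
    (hK : Measurable (Function.uncurry K)) (μ : Measure (Fin p → ℝ)) [SFinite μ] :
    Measurable (Gadj K μ) :=
  (hK.stronglyMeasurable.integral_prod_left').measurable

lemma Gop_bdd {p q : ℕ} {K : (Fin p → ℝ) → (Fin q → ℝ) → ℝ} {BK : ℝ}
    (hKbd : ∀ w θ, |K w θ| ≤ BK) (hK : Measurable (Function.uncurry K))
    (ν : Measure (Fin q → ℝ)) [IsProbabilityMeasure ν] :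
    ∀ w, |Gop K ν w| ≤ BK := by
  intro w
  have hm : Measurable fun θ => K w θ := hK.comp measurable_prodMk_left
  calc |Gop K ν w| = ‖∫ θ, K w θ ∂ν‖ := rfl
    _ ≤ ∫ θ, ‖K w θ‖ ∂ν := norm_integral_le_integral_norm _
    _ ≤ ∫ _θ, BK ∂ν := by
        refine integral_mono_ae ?_ (integrable_const _)
          (Filter.Eventually.of_forall fun θ => by simpa using hKbd w θ)
        exact (int_bdd hm.aestronglyMeasurable (fun θ => hKbd w θ)).norm
    _ = BK := by simp
  
lemma Gadj_bdd {p q : ℕ} {K : (Fin p → ℝ) → (Fin q → ℝ) → ℝ} {BK : ℝ}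
    (hKbd : ∀ w θ, |K w θ| ≤ BK) (hK : Measurable (Function.uncurry K))
    (μ : Measure (Fin p → ℝ)) [IsProbabilityMeasure μ] :
    ∀ θ, |Gadj K μ θ| ≤ BK := by
  intro θ
  have hm : Measurable fun w => K w θ := hK.comp measurable_prodMk_right
  calc |Gadj K μ θ| = ‖∫ w, K w θ ∂μ‖ := rfl
    _ ≤ ∫ w, ‖K w θ‖ ∂μ := norm_integral_le_integral_norm _
    _ ≤ ∫ _w, BK ∂μ := by
        refine integral_mono_ae ?_ (integrable_const _)
          (Filter.Eventually.of_forall fun w => by simpa using hKbd w θ)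
        exact (int_bdd hm.aestronglyMeasurable (fun w => hKbd w θ)).norm
    _ = BK := by simp

lemma gop_gadj {p q : ℕ} {K : (Fin p → ℝ) → (Fin q → ℝ) → ℝ} {BK : ℝ}
    (hKbd : ∀ w θ, |K w θ| ≤ BK) (hK : Measurable (Function.uncurry K))
    (μ : Measure (Fin p → ℝ)) [IsProbabilityMeasure μ]
    (ν : Measure (Fin q → ℝ)) [IsProbabilityMeasure ν] :
    ∫ w, Gop K ν w ∂μ = ∫ θ, Gadj K μ θ ∂ν := by
  have hi : Integrable (Function.uncurry K) (μ.prod ν) :=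
    int_bdd hK.aestronglyMeasurable (C := BK) (fun z => hKbd z.1 z.2)
  exact integral_integral_swap hi

lemma ae_abs_le {d : ℕ} (Z : Set (Fin d → ℝ)) (h : (Fin d → ℝ) → ℝ) (B M : ℝ)
    (hM0 : 0 ≤ M) (hB : ∀ z, |h z| ≤ B) (hs : supNormOn Z h ≤ M) :
    ∀ᵐ z ∂(volume.restrict Z), |h z| ≤ M := by
  have hfin : essSup (fun z => ENNReal.ofReal |h z|) (volume.restrict Z)
      ≤ ENNReal.ofReal B :=
    essSup_le_of_ae_le _ (Filter.Eventually.of_forall fun z =>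
      ENNReal.ofReal_le_ofReal (hB z))
  have hne : essSup (fun z => ENNReal.ofReal |h z|) (volume.restrict Z) ≠ ⊤ :=
    (hfin.trans_lt ENNReal.ofReal_lt_top).ne
  have hle : essSup (fun z => ENNReal.ofReal |h z|) (volume.restrict Z)
      ≤ ENNReal.ofReal M := (ENNReal.le_ofReal_iff_toReal_le hne hM0).2 hs
  filter_upwards [ae_le_essSup (fun z => ENNReal.ofReal |h z|)] with z hz
  exact (ENNReal.ofReal_le_ofReal_iff hM0).1 (hz.trans hle)

lemma avg_isDensity {d : ℕ} (Z : Set (Fin d → ℝ)) (T : ℕ) (hT : 0 < T)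
    (μs : ℕ → Measure (Fin d → ℝ)) (ρs : ℕ → (Fin d → ℝ) → ℝ)
    (h : ∀ t, IsDensityMeasure Z (μs t) (ρs t)) :
    IsDensityMeasure Z ((T : ℝ≥0∞)⁻¹ • ∑ t ∈ Finset.range T, μs t)
      (fun z => (T : ℝ)⁻¹ * ∑ t ∈ Finset.range T, ρs t z) := by
  have hT0 : (T : ℝ≥0∞) ≠ 0 := Nat.cast_ne_zero.2 hT.ne'
  have hTR : (0:ℝ) < (T : ℝ) := Nat.cast_pos.2 hT
  have hall : ∀ᵐ z ∂(volume.restrict Z), ∀ t, 0 < ρs t z :=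
    MeasureTheory.ae_all_iff.2 fun t => (h t).2.2.1
  refine ⟨?_, ?_, ?_, ?_⟩
  · constructor
    rw [Measure.smul_apply, Measure.finset_sum_apply]
    have : ∀ t ∈ Finset.range T, μs t Set.univ = 1 := fun t _ => by
      haveI := (h t).1
      exact measure_univ
    rw [Finset.sum_congr rfl this, Finset.sum_const, Finset.card_range, smul_eq_mul,
      nsmul_eq_mul, mul_one, ENNReal.inv_mul_cancel hT0 (ENNReal.natCast_ne_top T)]
  · exact (Finset.measurable_sum _ fun t _ => (h t).2.1).const_mul _
  · filter_upwards [hall] with z hz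
    exact mul_pos (by positivity)
      (Finset.sum_pos (fun i _ => hz i) (Finset.nonempty_range_iff.2 hT.ne'))
  · have hsum_eq : ∀ t ∈ Finset.range T, μs t
        = (volume.restrict Z).withDensity (fun z => ENNReal.ofReal (ρs t z)) :=
      fun t _ => (h t).2.2.2
    rw [Finset.sum_congr rfl hsum_eq,
      ← wd_finsum (Finset.range T) (fun t z => ENNReal.ofReal (ρs t z))
        (fun t => (h t).2.1.ennreal_ofReal),
      ← withDensity_smul' ((T : ℝ≥0∞)⁻¹) _ (by simp [hT0])]
    apply withDensity_congr_ae
    filter_upwards [hall] with z hz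
    have h1 : ENNReal.ofReal ((T : ℝ)⁻¹ * ∑ t ∈ Finset.range T, ρs t z)
        = ENNReal.ofReal ((T : ℝ)⁻¹) * ENNReal.ofReal (∑ t ∈ Finset.range T, ρs t z) :=
      ENNReal.ofReal_mul (by positivity)
    rw [h1, ENNReal.ofReal_sum_of_nonneg (fun i _ => (hz i).le),
      ENNReal.ofReal_inv_of_pos hTR, ENNReal.ofReal_natCast]
    rfl

end Aux2

/-- convergence of infinite-dimensional entropic mirror descent to a
mixed Nash equilibrium. -/
theorem md_converges_to_mixed_NE
    (p q T : ℕ) (hT : 0 < T)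
    (W : Set (Fin p → ℝ)) (Θ : Set (Fin q → ℝ))
    (hW : MeasurableSet W) (hΘ : MeasurableSet Θ)
    (hW0 : volume W ≠ 0) (hWfin : volume W ≠ ⊤)
    (hΘ0 : volume Θ ≠ 0) (hΘfin : volume Θ ≠ ⊤)
    (K : (Fin p → ℝ) → (Fin q → ℝ) → ℝ) (hK : Measurable (Function.uncurry K))
    (BK : ℝ) (hKbd : ∀ w θ, |K w θ| ≤ BK)
    (g : (Fin p → ℝ) → ℝ) (hg : Measurable g) (Bg : ℝ) (hgbd : ∀ w, |g w| ≤ Bg)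
    (M : ℝ) (hM : 0 < M)
    (hM1 : ∀ ν : Measure (Fin q → ℝ), (∃ σ, IsDensityMeasure Θ ν σ) →
        supNormOn W (fun w => g w - Gop K ν w) ≤ M)
    (hM2 : ∀ μ : Measure (Fin p → ℝ), (∃ ρ, IsDensityMeasure W μ ρ) →
        supNormOn Θ (fun θ => Gadj K μ θ) ≤ M)
    (μNE : Measure (Fin p → ℝ)) (ρNE : (Fin p → ℝ) → ℝ)
    (hμNE : IsDensityMeasure W μNE ρNE)
    (νNE : Measure (Fin q → ℝ)) (σNE : (Fin q → ℝ) → ℝ)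
    (hνNE : IsDensityMeasure Θ νNE σNE)
    (hNE1 : ∀ μ : Measure (Fin p → ℝ), (∃ ρ, IsDensityMeasure W μ ρ) →
        payoff g K μ νNE ≤ payoff g K μNE νNE)
    (hNE2 : ∀ ν : Measure (Fin q → ℝ), (∃ σ, IsDensityMeasure Θ ν σ) →
        payoff g K μNE νNE ≤ payoff g K μNE ν)
    (μs : ℕ → Measure (Fin p → ℝ)) (ρs : ℕ → (Fin p → ℝ) → ℝ)
    (hμs : ∀ t, IsDensityMeasure W (μs t) (ρs t))
    (νs : ℕ → Measure (Fin q → ℝ)) (σs : ℕ → (Fin q → ℝ) → ℝ)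
    (hνs : ∀ t, IsDensityMeasure Θ (νs t) (σs t))
    (hKL1 : IntegrableOn (fun w => ρNE w * Real.log (ρNE w / ρs 0 w)) W)
    (hKL2 : IntegrableOn (fun θ => σNE θ * Real.log (σNE θ / σs 0 θ)) Θ)
    (D₀ : ℝ)
    (hD₀ : D₀ = (∫ w in W, ρNE w * Real.log (ρNE w / ρs 0 w))
        + ∫ θ in Θ, σNE θ * Real.log (σNE θ / σs 0 θ))
    (hD₀pos : 0 < D₀)
    (η : ℝ) (hη : η = Real.sqrt (D₀ / (T : ℝ)) / M)
    (hrec1 : ∀ t, t < T →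
        μs (t + 1) = MDmeas W η (ρs t) (fun w => -(g w) + Gop K (νs t) w))
    (hrec2 : ∀ t, t < T →
        νs (t + 1) = MDmeas Θ η (σs t) (fun θ => -(Gadj K (μs t) θ))) :
    payoff g K μNE ((T : ℝ≥0∞)⁻¹ • ∑ t ∈ Finset.range T, νs t)
        - payoff g K ((T : ℝ≥0∞)⁻¹ • ∑ t ∈ Finset.range T, μs t) νNE
      ≤ 2 * M * Real.sqrt (D₀ / (T : ℝ)) ∧
    |payoff g K μNE ((T : ℝ≥0∞)⁻¹ • ∑ t ∈ Finset.range T, νs t)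
        - payoff g K μNE νNE| ≤ 2 * M * Real.sqrt (D₀ / (T : ℝ)) ∧
    |payoff g K ((T : ℝ≥0∞)⁻¹ • ∑ t ∈ Finset.range T, μs t) νNE
        - payoff g K μNE νNE| ≤ 2 * M * Real.sqrt (D₀ / (T : ℝ)) := by
  classical
  have hρNEm := hμNE.2.1
  have hρNE0 := hμNE.2.2.1
  have hσNEm := hνNE.2.1
  have hσNE0 := hνNE.2.2.1
  have hmW : volume.restrict W ≠ 0 := by
    rw [Ne, Measure.restrict_eq_zero]; exact hW0
  have hmΘ : volume.restrict Θ ≠ 0 := by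
    rw [Ne, Measure.restrict_eq_zero]; exact hΘ0
  have hBK0 : 0 ≤ BK := (abs_nonneg _).trans (hKbd 0 0)
  have hBg0 : 0 ≤ Bg := (abs_nonneg _).trans (hgbd 0)
  have hTR : (0:ℝ) < (T:ℝ) := Nat.cast_pos.2 hT
  have hDT0 : 0 < D₀ / (T:ℝ) := div_pos hD₀pos hTR
  have hs0 : 0 < Real.sqrt (D₀ / (T:ℝ)) := Real.sqrt_pos.2 hDT0
  have hη0 : 0 < η := by rw [hη]; positivity
  -- measurability and bounds for the payoff operators
  have hGopm : ∀ t, Measurable (Gop K (νs t)) := fun t => by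
    haveI := (hνs t).1; exact Gop_meas K hK (νs t)
  have hGopNEm : Measurable (Gop K νNE) := by
    haveI := hνNE.1; exact Gop_meas K hK νNE
  have hGadjm : ∀ t, Measurable (Gadj K (μs t)) := fun t => by
    haveI := (hμs t).1; exact Gadj_meas K hK (μs t)
  have hGopb : ∀ t w, |Gop K (νs t) w| ≤ BK := fun t => by
    haveI := (hνs t).1; exact Gop_bdd hKbd hK (νs t)
  have hGopNEb : ∀ w, |Gop K νNE w| ≤ BK := by
    haveI := hνNE.1; exact Gop_bdd hKbd hK νNE
  have hGadjb : ∀ t θ, |Gadj K (μs t) θ| ≤ BK := fun t => by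
    haveI := (hμs t).1; exact Gadj_bdd hKbd hK (μs t)
  -- loss functions: measurability, pointwise and a.e. bounds
  have hWm : ∀ t, Measurable (fun w => -(g w) + Gop K (νs t) w) :=
    fun t => hg.neg.add (hGopm t)
  have hWb : ∀ t w, |(-(g w) + Gop K (νs t) w)| ≤ Bg + BK := fun t w => by
    calc |(-(g w) + Gop K (νs t) w)| ≤ |(-(g w))| + |Gop K (νs t) w| := abs_add_le _ _
      _ ≤ Bg + BK := by rw [abs_neg]; exact add_le_add (hgbd w) (hGopb t w)
  have hWM : ∀ t, ∀ᵐ w ∂(volume.restrict W), |(-(g w) + Gop K (νs t) w)| ≤ M := by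
    intro t
    have hb : ∀ w, |g w - Gop K (νs t) w| ≤ Bg + BK := fun w => by
      calc |g w - Gop K (νs t) w| ≤ |g w| + |Gop K (νs t) w| := abs_sub _ _
        _ ≤ Bg + BK := add_le_add (hgbd w) (hGopb t w)
    have := ae_abs_le W (fun w => g w - Gop K (νs t) w) (Bg + BK) M hM.le hb
      (hM1 (νs t) ⟨σs t, hνs t⟩)
    filter_upwards [this] with w hw
    have he : -(g w) + Gop K (νs t) w = -(g w - Gop K (νs t) w) := by ring
    rw [he, abs_neg]; exact hw
  have hΘm : ∀ t, Measurable (fun θ => -(Gadj K (μs t) θ)) := fun t => (hGadjm t).neg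
  have hΘb : ∀ t θ, |(-(Gadj K (μs t) θ))| ≤ BK := fun t θ => by
    rw [abs_neg]; exact hGadjb t θ
  have hΘM : ∀ t, ∀ᵐ θ ∂(volume.restrict Θ), |(-(Gadj K (μs t) θ))| ≤ M := by
    intro t
    have := ae_abs_le Θ (fun θ => Gadj K (μs t) θ) BK M hM.le (hGadjb t)
      (hM2 (μs t) ⟨ρs t, hμs t⟩)
    filter_upwards [this] with θ hθ
    rwa [abs_neg]
  -- probability-measure facts for the densities
  have hρprob : ∀ t, IsProbabilityMeasure ((volume.restrict W).withDensity
      (fun w => ENNReal.ofReal (ρs t w))) := fun t => by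
    rw [← (hμs t).2.2.2]; exact (hμs t).1
  have hσprob : ∀ t, IsProbabilityMeasure ((volume.restrict Θ).withDensity
      (fun θ => ENNReal.ofReal (σs t θ))) := fun t => by
    rw [← (hνs t).2.2.2]; exact (hνs t).1
  have hρNEprob : IsProbabilityMeasure ((volume.restrict W).withDensity
      (fun w => ENNReal.ofReal (ρNE w))) := by
    rw [← hμNE.2.2.2]; exact hμNE.1
  have hσNEprob : IsProbabilityMeasure ((volume.restrict Θ).withDensity
      (fun θ => ENNReal.ofReal (σNE θ))) := by
    rw [← hνNE.2.2.2]; exact hνNE.1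
  -- one-step inequalities
  have stepW : ∀ t, t < T →
      Integrable (fun w => ρNE w * Real.log (ρNE w / ρs t w)) (volume.restrict W) →
      Integrable (fun w => ρNE w * Real.log (ρNE w / ρs (t+1) w)) (volume.restrict W) ∧
      η * ((∫ w in W, ρs t w * (-(g w) + Gop K (νs t) w))
          - ∫ w in W, ρNE w * (-(g w) + Gop K (νs t) w)) ≤
        (∫ w in W, ρNE w * Real.log (ρNE w / ρs t w))
          - (∫ w in W, ρNE w * Real.log (ρNE w / ρs (t+1) w)) + η^2 * M^2 / 2 := by
    intro t ht hint
    have heq : (volume.restrict W).withDensity (fun w => ENNReal.ofReal (ρs (t+1) w)) =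
        (volume.restrict W).withDensity (fun w => ENNReal.ofReal (ρs t w *
          Real.exp (-η * (-(g w) + Gop K (νs t) w)) /
          ∫ y, ρs t y * Real.exp (-η * (-(g y) + Gop K (νs t) y)) ∂(volume.restrict W))) := by
      rw [← (hμs (t+1)).2.2.2, hrec1 t ht]
      rfl
    exact md_step hmW (ρs t) (ρs (t+1)) ρNE (hμs t).2.1 (hμs (t+1)).2.1 hρNEm
      (hμs t).2.2.1 (hμs (t+1)).2.2.1 hρNE0
      (hρprob t) (hρprob (t+1)) hρNEprob
      (fun w => -(g w) + Gop K (νs t) w) (hWm t) (Bg + BK) (hWb t)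
      M hM (hWM t) η hη0 heq hint
  have stepΘ : ∀ t, t < T →
      Integrable (fun θ => σNE θ * Real.log (σNE θ / σs t θ)) (volume.restrict Θ) →
      Integrable (fun θ => σNE θ * Real.log (σNE θ / σs (t+1) θ)) (volume.restrict Θ) ∧
      η * ((∫ θ in Θ, σs t θ * (-(Gadj K (μs t) θ)))
          - ∫ θ in Θ, σNE θ * (-(Gadj K (μs t) θ))) ≤
        (∫ θ in Θ, σNE θ * Real.log (σNE θ / σs t θ))
          - (∫ θ in Θ, σNE θ * Real.log (σNE θ / σs (t+1) θ)) + η^2 * M^2 / 2 := by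
    intro t ht hint
    have heq : (volume.restrict Θ).withDensity (fun θ => ENNReal.ofReal (σs (t+1) θ)) =
        (volume.restrict Θ).withDensity (fun θ => ENNReal.ofReal (σs t θ *
          Real.exp (-η * (-(Gadj K (μs t) θ))) /
          ∫ y, σs t y * Real.exp (-η * (-(Gadj K (μs t) y))) ∂(volume.restrict Θ))) := by
      rw [← (hνs (t+1)).2.2.2, hrec2 t ht]
      rfl
    exact md_step hmΘ (σs t) (σs (t+1)) σNE (hνs t).2.1 (hνs (t+1)).2.1 hσNEm
      (hνs t).2.2.1 (hνs (t+1)).2.2.1 hσNE0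
      (hσprob t) (hσprob (t+1)) hσNEprob
      (fun θ => -(Gadj K (μs t) θ)) (hΘm t) BK (hΘb t)
      M hM (hΘM t) η hη0 heq hint
  -- integrability propagates
  have hKLint : ∀ t, t ≤ T →
      Integrable (fun w => ρNE w * Real.log (ρNE w / ρs t w)) (volume.restrict W) ∧
      Integrable (fun θ => σNE θ * Real.log (σNE θ / σs t θ)) (volume.restrict Θ) := by
    intro t
    induction t with
    | zero => intro _; exact ⟨hKL1, hKL2⟩
    | succ n ih =>
        intro hn
        have hn' : n < T := Nat.lt_of_succ_le hn
        obtain ⟨i1, i2⟩ := ih (le_of_lt hn')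
        exact ⟨(stepW n hn' i1).1, (stepΘ n hn' i2).1⟩
  -- payoff conversions
  have eW : ∀ t (μ : Measure (Fin p → ℝ)) (ρ : (Fin p → ℝ) → ℝ),
      IsDensityMeasure W μ ρ →
      (∫ w in W, ρ w * (-(g w) + Gop K (νs t) w)) = -payoff g K μ (νs t) := by
    intro t μ ρ hd
    haveI := hd.1
    haveI := (hνs t).1
    rw [← integral_wd hd.2.1 (hd.2.2.1.mono fun x h => h.le), ← hd.2.2.2]
    have h1 : Integrable g μ := int_bdd hg.aestronglyMeasurable hgbd
    have h2 : Integrable (Gop K (νs t)) μ :=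
      int_bdd (hGopm t).aestronglyMeasurable (hGopb t)
    have h3 : ∫ w, (-(g w) + Gop K (νs t) w) ∂μ
        = (∫ w, Gop K (νs t) w ∂μ) - ∫ w, g w ∂μ := by
      rw [← integral_sub h2 h1]
      apply integral_congr_ae
      filter_upwards with w
      ring
    rw [h3]
    simp only [payoff]
    ring
  have eΘ : ∀ t (ν : Measure (Fin q → ℝ)) (σ : (Fin q → ℝ) → ℝ),
      IsDensityMeasure Θ ν σ →
      (∫ θ in Θ, σ θ * (-(Gadj K (μs t) θ))) = -∫ θ, Gadj K (μs t) θ ∂ν := by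
    intro t ν σ hd
    haveI := hd.1
    haveI := (hμs t).1
    rw [← integral_wd hd.2.1 (hd.2.2.1.mono fun x h => h.le), ← hd.2.2.2, integral_neg]
  -- combined step inequality
  have stepA : ∀ t, t < T →
      η * (payoff g K μNE (νs t) - payoff g K (μs t) νNE) ≤
        ((∫ w in W, ρNE w * Real.log (ρNE w / ρs t w))
          - ∫ w in W, ρNE w * Real.log (ρNE w / ρs (t+1) w))
        + ((∫ θ in Θ, σNE θ * Real.log (σNE θ / σs t θ))
          - ∫ θ in Θ, σNE θ * Real.log (σNE θ / σs (t+1) θ))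
        + η^2 * M^2 := by
    intro t ht
    obtain ⟨iW, iΘ⟩ := hKLint t (le_of_lt ht)
    have W2 := (stepW t ht iW).2
    have Θ2 := (stepΘ t ht iΘ).2
    rw [eW t (μs t) (ρs t) (hμs t), eW t μNE ρNE hμNE] at W2
    rw [eΘ t (νs t) (σs t) (hνs t), eΘ t νNE σNE hνNE] at Θ2
    haveI := (hμs t).1
    haveI := (hνs t).1
    haveI := hνNE.1
    have hfub1 : ∫ θ, Gadj K (μs t) θ ∂(νs t) = ∫ w, Gop K (νs t) w ∂(μs t) :=
      (gop_gadj hKbd hK (μs t) (νs t)).symm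
    have hfub2 : ∫ θ, Gadj K (μs t) θ ∂νNE = ∫ w, Gop K νNE w ∂(μs t) :=
      (gop_gadj hKbd hK (μs t) νNE).symm
    rw [hfub1, hfub2] at Θ2
    have hkey : η * (payoff g K μNE (νs t) - payoff g K (μs t) νNE)
        = η * (-payoff g K (μs t) (νs t) - -payoff g K μNE (νs t))
          + η * (-(∫ w, Gop K (νs t) w ∂(μs t)) - -(∫ w, Gop K νNE w ∂(μs t))) := by
      simp only [payoff]
      ring
    rw [hkey]
    linarith [W2, Θ2]
  -- sum over steps
  have hsumA : η * ∑ t ∈ Finset.range T,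
      (payoff g K μNE (νs t) - payoff g K (μs t) νNE) ≤ D₀ + T * (η^2 * M^2) := by
    have h1 : ∑ t ∈ Finset.range T,
        (η * (payoff g K μNE (νs t) - payoff g K (μs t) νNE)) ≤
        ∑ t ∈ Finset.range T,
          (((∫ w in W, ρNE w * Real.log (ρNE w / ρs t w))
            - ∫ w in W, ρNE w * Real.log (ρNE w / ρs (t+1) w))
          + (((∫ θ in Θ, σNE θ * Real.log (σNE θ / σs t θ))
            - ∫ θ in Θ, σNE θ * Real.log (σNE θ / σs (t+1) θ))
          + η^2 * M^2)) :=
      Finset.sum_le_sum fun t ht => by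
        have := stepA t (Finset.mem_range.1 ht); linarith
    have h2 : ∑ t ∈ Finset.range T,
        (((∫ w in W, ρNE w * Real.log (ρNE w / ρs t w))
          - ∫ w in W, ρNE w * Real.log (ρNE w / ρs (t+1) w))
        + (((∫ θ in Θ, σNE θ * Real.log (σNE θ / σs t θ))
          - ∫ θ in Θ, σNE θ * Real.log (σNE θ / σs (t+1) θ))
        + η^2 * M^2))
        = ((∫ w in W, ρNE w * Real.log (ρNE w / ρs 0 w))
          - ∫ w in W, ρNE w * Real.log (ρNE w / ρs T w))
        + (((∫ θ in Θ, σNE θ * Real.log (σNE θ / σs 0 θ))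
          - ∫ θ in Θ, σNE θ * Real.log (σNE θ / σs T θ))
        + T * (η^2 * M^2)) := by
      rw [Finset.sum_add_distrib, Finset.sum_add_distrib,
        Finset.sum_range_sub' (fun t => ∫ w in W, ρNE w * Real.log (ρNE w / ρs t w)),
        Finset.sum_range_sub' (fun t => ∫ θ in Θ, σNE θ * Real.log (σNE θ / σs t θ)),
        Finset.sum_const, Finset.card_range, nsmul_eq_mul]
    have nW : 0 ≤ ∫ w in W, ρNE w * Real.log (ρNE w / ρs T w) :=
      kl_nonneg hρNEm (hμs T).2.1 hρNE0 (hμs T).2.2.1 hρNEprob (hρprob T)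
        (hKLint T le_rfl).1
    have nΘ : 0 ≤ ∫ θ in Θ, σNE θ * Real.log (σNE θ / σs T θ) :=
      kl_nonneg hσNEm (hνs T).2.1 hσNE0 (hνs T).2.2.1 hσNEprob (hσprob T)
        (hKLint T le_rfl).2
    rw [Finset.mul_sum]
    calc ∑ t ∈ Finset.range T,
        (η * (payoff g K μNE (νs t) - payoff g K (μs t) νNE)) ≤ _ := h1
      _ = _ := h2
      _ ≤ D₀ + T * (η^2 * M^2) := by rw [hD₀]; linarith
  -- averaging identities
  haveI := hμNE.1
  haveI := hνNE.1
  have hbarν : payoff g K μNE ((T : ℝ≥0∞)⁻¹ • ∑ t ∈ Finset.range T, νs t)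
      = (T:ℝ)⁻¹ * ∑ t ∈ Finset.range T, payoff g K μNE (νs t) := by
    have hpt : ∀ w, Gop K ((T : ℝ≥0∞)⁻¹ • ∑ t ∈ Finset.range T, νs t) w
        = (T:ℝ)⁻¹ * ∑ t ∈ Finset.range T, Gop K (νs t) w := by
      intro w
      have hint : ∀ t ∈ Finset.range T, Integrable (fun θ => K w θ) (νs t) := fun t _ => by
        haveI := (hνs t).1
        exact int_bdd (hK.comp measurable_prodMk_left).aestronglyMeasurable
          (fun θ => hKbd w θ)
      simp only [Gop]
      rw [integral_smul_measure, integral_finset_sum_measure hint]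
      simp [ENNReal.toReal_inv]
    simp only [payoff]
    have hG : ∫ w, Gop K ((T : ℝ≥0∞)⁻¹ • ∑ t ∈ Finset.range T, νs t) w ∂μNE
        = (T:ℝ)⁻¹ * ∑ t ∈ Finset.range T, ∫ w, Gop K (νs t) w ∂μNE := by
      rw [integral_congr_ae (Filter.Eventually.of_forall hpt), integral_const_mul,
        integral_finset_sum _ (fun t _ =>
          int_bdd (hGopm t).aestronglyMeasurable (hGopb t))]
    rw [hG]
    have hsub : ∑ t ∈ Finset.range T,
        ((∫ w, g w ∂μNE) - ∫ w, Gop K (νs t) w ∂μNE)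
        = T * (∫ w, g w ∂μNE) - ∑ t ∈ Finset.range T, ∫ w, Gop K (νs t) w ∂μNE := by
      rw [Finset.sum_sub_distrib, Finset.sum_const, Finset.card_range, nsmul_eq_mul]
    rw [hsub, mul_sub, ← mul_assoc, inv_mul_cancel₀ hTR.ne', one_mul]
  have hbarint : ∀ (f : (Fin p → ℝ) → ℝ), Measurable f → ∀ C : ℝ, (∀ w, |f w| ≤ C) →
      ∫ w, f w ∂((T : ℝ≥0∞)⁻¹ • ∑ t ∈ Finset.range T, μs t)
        = (T:ℝ)⁻¹ * ∑ t ∈ Finset.range T, ∫ w, f w ∂(μs t) := by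
    intro f hf C hC
    have hint : ∀ t ∈ Finset.range T, Integrable f (μs t) := fun t _ => by
      haveI := (hμs t).1
      exact int_bdd hf.aestronglyMeasurable hC
    rw [integral_smul_measure, integral_finset_sum_measure hint]
    simp [ENNReal.toReal_inv]
  have hbarμ : payoff g K ((T : ℝ≥0∞)⁻¹ • ∑ t ∈ Finset.range T, μs t) νNE
      = (T:ℝ)⁻¹ * ∑ t ∈ Finset.range T, payoff g K (μs t) νNE := by
    simp only [payoff]
    rw [hbarint g hg Bg hgbd, hbarint (Gop K νNE) hGopNEm BK hGopNEb,
      ← mul_sub, ← Finset.sum_sub_distrib]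
  -- final algebra
  have hs2 : Real.sqrt (D₀ / (T:ℝ)) ^ 2 = D₀ / (T:ℝ) := Real.sq_sqrt hDT0.le
  have hkeyalg : ∀ s : ℝ, 0 < s → s^2 = D₀/(T:ℝ) →
      (T:ℝ)⁻¹ * (D₀/(s/M) + T*((s/M)*M^2)) = 2*M*s := by
    intro s hs hseq
    have hD : D₀ = s^2 * (T:ℝ) := by rw [hseq]; field_simp
    rw [hD]
    field_simp
    ring
  have hfinal : (T:ℝ)⁻¹ * (D₀/η + T*(η*M^2)) = 2 * M * Real.sqrt (D₀ / (T:ℝ)) := by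
    rw [hη]
    exact hkeyalg _ hs0 hs2
  have hA : ∑ t ∈ Finset.range T, (payoff g K μNE (νs t) - payoff g K (μs t) νNE)
      ≤ D₀/η + T*(η*M^2) := by
    have h2 : (D₀ + T*(η^2*M^2))/η = D₀/η + T*(η*M^2) := by
      field_simp
    rw [← h2, le_div_iff₀ hη0]
    calc (∑ t ∈ Finset.range T,
        (payoff g K μNE (νs t) - payoff g K (μs t) νNE)) * η
        = η * ∑ t ∈ Finset.range T,
            (payoff g K μNE (νs t) - payoff g K (μs t) νNE) := mul_comm _ _
      _ ≤ D₀ + T * (η^2 * M^2) := hsumA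
  have part1 : payoff g K μNE ((T : ℝ≥0∞)⁻¹ • ∑ t ∈ Finset.range T, νs t)
      - payoff g K ((T : ℝ≥0∞)⁻¹ • ∑ t ∈ Finset.range T, μs t) νNE
      ≤ 2 * M * Real.sqrt (D₀ / (T:ℝ)) := by
    rw [hbarν, hbarμ, ← mul_sub, ← Finset.sum_sub_distrib]
    calc (T:ℝ)⁻¹ * ∑ t ∈ Finset.range T,
        (payoff g K μNE (νs t) - payoff g K (μs t) νNE)
        ≤ (T:ℝ)⁻¹ * (D₀/η + T*(η*M^2)) :=
          mul_le_mul_of_nonneg_left hA (by positivity)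
      _ = 2 * M * Real.sqrt (D₀ / (T:ℝ)) := hfinal
  -- Nash-equilibrium comparisons for the averaged measures
  have hnubar : IsDensityMeasure Θ ((T : ℝ≥0∞)⁻¹ • ∑ t ∈ Finset.range T, νs t)
      (fun θ => (T:ℝ)⁻¹ * ∑ t ∈ Finset.range T, σs t θ) :=
    avg_isDensity Θ T hT νs σs hνs
  have hmubar : IsDensityMeasure W ((T : ℝ≥0∞)⁻¹ • ∑ t ∈ Finset.range T, μs t)
      (fun w => (T:ℝ)⁻¹ * ∑ t ∈ Finset.range T, ρs t w) :=
    avg_isDensity W T hT μs ρs hμs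
  have h2 := hNE2 _ ⟨_, hnubar⟩
  have h3 := hNE1 _ ⟨_, hmubar⟩
  have hb0 : 0 ≤ 2 * M * Real.sqrt (D₀ / (T:ℝ)) := by positivity
  refine ⟨part1, ?_, ?_⟩
  · rw [abs_le]
    constructor <;> linarith [h2, h3, part1]
  · rw [abs_le]
    constructor <;> linarith [h2, h3, part1]

end

end Paper
end
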